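/- For every ω ∈ 𝒯, λ, h ≥ 0, b > 0 and every μ ∈ 𝒫 with Σ_x x μ(x) = Σ_{α,β,x} x μ_b^{λ,h}(α,β,x), one has Q(μ) ≤ Q(μ_b^{λ,h}), and equality holds if and only if μ = μ_b^{λ,h}. -/

import Mathlib

open Filter Topology
open scoped BigOperators ENNReal

noncomputable section
namespace Copoly

/-- The number of elements of a finite type satisfying a predicate. -/
def cardOf {α : Type*} [Fintype α] (P : α → Prop) : ℕ :=
  (@Finset.filter _ P (Classical.decPred P) Finset.univ).card

/-- A single step of the simple random walk. -/
def step (b : Bool) : ℤ := if b then 1 else -1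

/-- The simple random walk path built from the increments `y`. -/
def walk (y : ℕ → Bool) (x : ℕ) : ℤ := ∑ i ∈ Finset.range x, step (y i)

/-- `sign (S x)`, with the convention `sign (S x) = sign (S (x-1))` when `S x = 0`. -/
def wsign (y : ℕ → Bool) : ℕ → ℤ
  | 0 => 1
  | x + 1 => if walk y (x + 1) = 0 then wsign y x else Int.sign (walk y (x + 1))

/-- Extension of a finite tuple of increments by `false`. -/
def ext {N : ℕ} (y : Fin N → Bool) : ℕ → Bool :=
  fun i => if h : i < N then y ⟨i, h⟩ else false

/-- The partition function `Z_{N,ω,λ,h} = E[exp (λ ∑_{x=1}^N (ω_x + h) sign (S_x))]`,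
written as the exact average over the `2^N` equally likely increment strings. -/
def Zpart (ω : ℕ → ℤ) (lam h : ℝ) (N : ℕ) : ℝ :=
  (1 / 2 : ℝ) ^ N * ∑ y : Fin N → Bool,
    Real.exp (lam * ∑ x ∈ Finset.Icc 1 N, ((ω x : ℝ) + h) * (wsign (ext y) x : ℝ))

/-- `ω` is centered and `2T`-periodic with `T ≥ 1`. -/
def IsPeriod (ω : ℕ → ℤ) (T : ℕ) : Prop :=
  0 < T ∧ (∀ x, ω (x + 2 * T) = ω x) ∧ ∑ x ∈ Finset.Icc 1 (2 * T), ω x = 0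

/-- The class `𝒯` of nontrivial centered periodic sequences with values in `{-1,1}`. -/
def memT (ω : ℕ → ℤ) : Prop :=
  (∀ x, ω x = 1 ∨ ω x = -1) ∧ (∃ T, IsPeriod ω T) ∧
    ¬ (∀ k : ℕ, 1 ≤ k → ω (2 * k - 1) * ω (2 * k) = -1)

/-- `T_ω`, the smallest (half-)period of `ω`. -/
def Tper (ω : ℕ → ℤ) : ℕ := sInf {T | IsPeriod ω T}

/-- The free energy `f_ω(λ,h)` (the limit defining it exists). -/
def freeEnergy (ω : ℕ → ℤ) (lam h : ℝ) : ℝ :=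
  limUnder atTop fun N : ℕ => Real.log (Zpart ω lam h N) / N

/-- `φ_ω(λ,h) = f_ω(λ,h) - λ h`. -/
def phiFE (ω : ℕ → ℤ) (lam h : ℝ) : ℝ := freeEnergy ω lam h - lam * h

/-- `ξ_{α,β} = ∑_{x=2a+1}^{2b} ω_x` for representatives `a ∈ α`, `b ∈ β` with `a < b`. -/
def xiM (T : ℕ) (ω : ℕ → ℤ) (α β : ZMod T) : ℤ :=
  ∑ x ∈ Finset.Icc (2 * α.val + 1)
      (2 * (if α.val < β.val then β.val else β.val + T)), ω x

/-- `K(x) = P(η = x)`, the law of the first return time to `0` of the walk. -/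
def Kret (x : ℕ) : ℝ :=
  if x = 0 then 0 else
    (1 / 2 : ℝ) ^ x * (cardOf fun y : Fin x → Bool =>
      walk (ext y) x = 0 ∧ ∀ z, 0 < z → z < x → walk (ext y) z ≠ 0 : ℕ)

/-- `p_{α,β} = P(η/2 ∈ β - α)`. -/
def pmat (T : ℕ) (α β : ZMod T) : ℝ :=
  ∑' n : ℕ, if (n : ZMod T) = β - α then Kret (2 * n) else 0

/-- `K_{α,β}(x) = P(η = x | η/2 ∈ β - α)`. -/
def Kcond (T : ℕ) (α β : ZMod T) (x : ℕ) : ℝ :=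
  if x % 2 = 0 ∧ ((x / 2 : ℕ) : ZMod T) = β - α then Kret x / pmat T α β else 0

/-- `Φ^{λ,h}_{α,β}(x) = log ((1 + exp (-2(λ ξ_{α,β} + λ h x)))/2)`. -/
def PhiM (T : ℕ) (ω : ℕ → ℤ) (lam h : ℝ) (α β : ZMod T) (x : ℕ) : ℝ :=
  Real.log ((1 + Real.exp (-2 * (lam * (xiM T ω α β : ℝ) + lam * h * x))) / 2)

/-- The matrix `A_{α,β}(b,λ,h)`. -/
def Amat (T : ℕ) (ω : ℕ → ℤ) (b lam h : ℝ) (α β : ZMod T) : ℝ :=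
  pmat T α β * ∑' x : ℕ, Kcond T α β x * Real.exp (PhiM T ω lam h α β x - b * x)

/-- The Perron–Frobenius eigenvalue of a matrix with positive entries: the unique
eigenvalue admitting a strictly positive eigenvector. -/
def PFeig {T : ℕ} (A : ZMod T → ZMod T → ℝ) : ℝ :=
  sSup {r : ℝ | ∃ v : ZMod T → ℝ, (∀ i, 0 < v i) ∧ ∀ i, (∑' j : ZMod T, A i j * v j) = r * v i}

/-- `Z(b,λ,h)`, the Perron–Frobenius eigenvalue of `A(b,λ,h)`. -/
def Zeig (T : ℕ) (ω : ℕ → ℤ) (b lam h : ℝ) : ℝ := PFeig (Amat T ω b lam h)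

open Classical in
/-- `b̃(λ,h)`: the unique `b > 0` solving `Z(b,λ,h) = 1` if it exists, and `0` otherwise. -/
def btilde (T : ℕ) (ω : ℕ → ℤ) (lam h : ℝ) : ℝ :=
  if hb : ∃ b > 0, Zeig T ω b lam h = 1 then hb.choose else 0

/-- The state space `𝕊 × 𝕊 × 2ℕ` (the last coordinate records the even excursion length). -/
abbrev Sp (T : ℕ) := ZMod T × ZMod T × ℕ

/-- First `𝕊`-marginal of `μ`. -/
def marg1 {T : ℕ} (μ : Sp T → ℝ) (α : ZMod T) : ℝ := ∑' q : ZMod T × ℕ, μ (α, q.1, q.2)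

/-- Second `𝕊`-marginal of `μ`. -/
def marg2 {T : ℕ} (μ : Sp T → ℝ) (β : ZMod T) : ℝ := ∑' q : ZMod T × ℕ, μ (q.1, β, q.2)

/-- The set `𝒫`: probability measures on `𝕊 × 𝕊 × 2ℕ` with equal `𝕊`-marginals,
supported on `{(α,β,x) : x ∈ 2ℕ, x/2 ∈ β - α}`. -/
def memP {T : ℕ} (μ : Sp T → ℝ) : Prop :=
  (∀ p, 0 ≤ μ p) ∧ HasSum μ 1 ∧
    (∀ p : Sp T, μ p ≠ 0 →
      p.2.2 % 2 = 0 ∧ 2 ≤ p.2.2 ∧ ((p.2.2 / 2 : ℕ) : ZMod T) = p.2.1 - p.1) ∧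
    ∀ γ, marg1 μ γ = marg2 μ γ

/-- The nonnegative summand `a log (a/c) - a + c` of relative entropy. -/
def klF (a c : ℝ) : ℝ := a * Real.log (a / c) - a + c

/-- Relative entropy `H(μ | ν) ∈ [0,∞]` of two probability measures on a countable space. -/
def Dkl {T : ℕ} (μ ν : Sp T → ℝ) : ℝ≥0∞ := ∑' p : Sp T, ENNReal.ofReal (klF (μ p) (ν p))

/-- The rate functional `I(μ) = ∑ μ(α,β,x) log (μ(α,β,x)/(μ(α) p_{α,β} K_{α,β}(x))) ∈ [0,∞]`. -/
def Ifun (T : ℕ) (μ : Sp T → ℝ) : ℝ≥0∞ :=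
  ∑' p : Sp T,
    ENNReal.ofReal (klF (μ p) (marg1 μ p.1 * pmat T p.1 p.2.1 * Kcond T p.1 p.2.1 p.2.2))

/-- `Q(μ) = ∑ Φ^{λ,h}_{α,β}(x) μ(α,β,x) - I(μ)`, with values in `[-∞,∞)`. -/
def Qfun (T : ℕ) (ω : ℕ → ℤ) (lam h : ℝ) (μ : Sp T → ℝ) : EReal :=
  ((∑' p : Sp T, PhiM T ω lam h p.1 p.2.1 p.2.2 * μ p : ℝ) : EReal) - (Ifun T μ : EReal)

/-- The measure `μ_b^{λ,h}(α,β,x) = π(α) p_{α,β} K_{α,β}(x) exp(Φ(x) - bx) v_β/(Z v_α)`. -/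
def muB (T : ℕ) (ω : ℕ → ℤ) (b lam h : ℝ) (π v : ZMod T → ℝ) (p : Sp T) : ℝ :=
  π p.1 * pmat T p.1 p.2.1 * Kcond T p.1 p.2.1 p.2.2 *
      Real.exp (PhiM T ω lam h p.1 p.2.1 p.2.2 - b * p.2.2) * v p.2.1 /
    (Zeig T ω b lam h * v p.1)

/-- `v` is a strictly positive right Perron–Frobenius eigenvector of `A(b,λ,h)` and `π` is
the probability left eigenvector (with eigenvalue 1) of the associated stochastic matrix
`(A_{α,β} v_β / (Z v_α))`. -/
def IsPF (T : ℕ) (ω : ℕ → ℤ) (b lam h : ℝ) (π v : ZMod T → ℝ) : Prop :=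
  (∀ i, 0 < v i) ∧
    (∀ i, (∑' j : ZMod T, Amat T ω b lam h i j * v j) = Zeig T ω b lam h * v i) ∧
    (∀ i, 0 ≤ π i) ∧ (∑' i : ZMod T, π i) = 1 ∧
    ∀ j, (∑' i : ZMod T, π i * (Amat T ω b lam h i j * v j / (Zeig T ω b lam h * v i))) = π j

/-- `H̃(μ | ν)`: the difference of relative entropies
`H(μ | ν) - H(μ_1 | ν_1)`, with values in `[-∞,∞]`. -/
def Htil {T : ℕ} (μ ν : Sp T → ℝ) : EReal :=
  (Dkl μ ν : EReal) - ((∑' α : ZMod T, klF (marg1 μ α) (marg1 ν α) : ℝ) : EReal)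

open Classical in
/-- `f(b) = ∑_{α,β,x} x μ_b^{λ,h}(α,β,x)` (defined through a choice of the
Perron–Frobenius data, on which it does not depend). -/
def fmean (T : ℕ) (ω : ℕ → ℤ) (b lam h : ℝ) : ℝ :=
  if hpf : ∃ w : (ZMod T → ℝ) × (ZMod T → ℝ), IsPF T ω b lam h w.1 w.2 then
    ∑' p : Sp T, (p.2.2 : ℝ) * muB T ω b lam h hpf.choose.1 hpf.choose.2 p
  else 0

/-- `Φ̂_{α,β}(x)` from the large-`λ` asymptotics. -/
def PhiHat (T : ℕ) (ω : ℕ → ℤ) (M : ℝ) (α β : ZMod T) (x : ℕ) : ℝ :=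
  -Real.log 2 +
    (if xiM T ω α β = -(x : ℤ) then Real.log (1 + Real.exp (2 * M * x)) else 0)

/-- `Ẑ(M)`, the Perron–Frobenius eigenvalue of `(p_{α,β} ∑_x K_{α,β}(x) exp (Φ̂_{α,β}(x)))`. -/
def Zhat (T : ℕ) (ω : ℕ → ℤ) (M : ℝ) : ℝ :=
  PFeig fun α β : ZMod T => pmat T α β * ∑' x : ℕ, Kcond T α β x * Real.exp (PhiHat T ω M α β x)

/-- The successive return times to `0` of the walk (`sInf ∅ = 0` on the irrelevant
event that the walk does not return). -/
def eta : ℕ → (ℕ → Bool) → ℕ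
  | 0, _ => 0
  | k + 1, y => sInf {x | eta k y < x ∧ walk y x = 0}

/-- Probability measures on `𝕊 × 𝕊 × 2ℕ`, with the topology of weak convergence
(= pointwise convergence on a countable discrete space). -/
abbrev PM (T : ℕ) := {μ : Sp T → ℝ // (∀ p, 0 ≤ μ p) ∧ HasSum μ 1}

/-- The empirical measure `L_m` of `{(α_j, β_j, Δη_j)}_{j<m}` along the path `y`. -/
def LmFun (T : ℕ) (m : ℕ) (y : ℕ → Bool) (p : Sp T) : ℝ :=
  (cardOf fun j : Fin m =>
      ((eta j.val y / 2 : ℕ) : ZMod T) = p.1 ∧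
        ((eta (j.val + 1) y / 2 : ℕ) : ZMod T) = p.2.1 ∧
        eta (j.val + 1) y - eta j.val y = p.2.2 : ℕ) / (m : ℝ)

open Classical in
/-- `P(L_m ∈ A)`: the probability that the `m`-th return to `0` occurs (at some time `n`)
and the empirical measure `L_m` belongs to `A`, written via cylinder sets. -/
def Pevent (T : ℕ) (A : Set (PM T)) (m : ℕ) : ℝ :=
  ∑' n : ℕ, (1 / 2 : ℝ) ^ n *
    (cardOf fun y : Fin n → Bool =>
      eta m (ext y) = n ∧ (∀ j, j < m → eta j (ext y) < eta (j + 1) (ext y)) ∧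
        ∃ hpm : (∀ p, 0 ≤ LmFun T m (ext y) p) ∧ HasSum (LmFun T m (ext y)) 1,
          (⟨LmFun T m (ext y), hpm⟩ : PM T) ∈ A : ℕ)

open Classical in
/-- The rate functional on probability measures: `I(μ)` if `μ ∈ 𝒫` and `+∞` otherwise. -/
def IfullPM {T : ℕ} (μ : PM T) : ℝ≥0∞ := if memP μ.1 then Ifun T μ.1 else ⊤

open Classical in
/-- `log` with values in `[-∞,∞)`: `elog r = -∞` for `r ≤ 0`. -/
def elog (r : ℝ) : EReal := if r ≤ 0 then ⊥ else ((Real.log r : ℝ) : EReal)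

/-- The space `(𝕊 × 2ℕ) × (𝕊 × 2ℕ)`. -/
abbrev W (T : ℕ) := (ZMod T × ℕ) × (ZMod T × ℕ)

/-- The transition kernel `q((α,x),(α',x')) = p_{α,α'} K_{α,α'}(x')`. -/
def qker (T : ℕ) (w w' : ZMod T × ℕ) : ℝ := pmat T w.1 w'.1 * Kcond T w.1 w'.1 w'.2

/-- First marginal of a measure on `(𝕊 × 2ℕ)²`. -/
def nu1 {T : ℕ} (ν : W T → ℝ) (w : ZMod T × ℕ) : ℝ := ∑' w' : ZMod T × ℕ, ν (w, w')

/-- Second marginal of a measure on `(𝕊 × 2ℕ)²`. -/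
def nu2 {T : ℕ} (ν : W T → ℝ) (w : ZMod T × ℕ) : ℝ := ∑' w' : ZMod T × ℕ, ν (w', w)

/-- `ν̂(α,β,x) = ∑_z ν(α,z,β,x)`. -/
def nuHat {T : ℕ} (ν : W T → ℝ) (p : Sp T) : ℝ := ∑' z : ℕ, ν ((p.1, z), (p.2.1, p.2.2))

open Classical in
/-- `Î(ν) = H(ν | ν₁ ⊗ q)` if the two marginals of `ν` coincide, `+∞` otherwise. -/
def Ihat {T : ℕ} (ν : W T → ℝ) : ℝ≥0∞ :=
  if ∀ w, nu1 ν w = nu2 ν w then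
    ∑' w : W T, ENNReal.ofReal (klF (ν w) (nu1 ν w.1 * qker T w.1 w.2))
  else ⊤

/-- Relative entropy `H(ν | ρ) ∈ [0,∞]` on `(𝕊 × 2ℕ)²`. -/
def DklW {T : ℕ} (ν ρ : W T → ℝ) : ℝ≥0∞ := ∑' w : W T, ENNReal.ofReal (klF (ν w) (ρ w))

/-- `μ̄((α,x),(α',x')) = (∑_γ μ(γ,α,x) / ∑_{γ,z} μ(γ,α,z)) μ(α,α',x')`
(with the convention that the value is `0` when the denominator vanishes). -/
def mubar {T : ℕ} (μ : Sp T → ℝ) (w : W T) : ℝ :=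
  ((∑' γ : ZMod T, μ (γ, w.1.1, w.1.2)) / marg2 μ w.1.1) * μ (w.1.1, w.2.1, w.2.2)

end Copoly

namespace Copoly

-- Auxiliary development

section Aux

lemma klF_self (a : ℝ) : klF a a = 0 := by
  rcases eq_or_ne a 0 with rfl | ha
  · simp [klF]
  · simp [klF, div_self ha]

lemma klF_zero_left (c : ℝ) : klF 0 c = c := by simp [klF]

lemma klF_nonneg {a c : ℝ} (ha : 0 ≤ a) (hc : 0 ≤ c) (h : a ≠ 0 → c ≠ 0) :
    0 ≤ klF a c := by
  rcases eq_or_lt_of_le ha with h0 | hapos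
  · simp [klF, ← h0, hc]
  · have hcpos : 0 < c := (h hapos.ne').lt_of_le' hc
    have hlog : Real.log (c / a) ≤ c / a - 1 :=
      Real.log_le_sub_one_of_pos (by positivity)
    have hld : Real.log (c / a) = - Real.log (a / c) := by
      rw [← Real.log_inv]; congr 1; field_simp
    have : a * (c / a - 1) ≥ a * Real.log (c/a) := by
      exact mul_le_mul_of_nonneg_left hlog ha
    have h2 : a * (c/a - 1) = c - a := by field_simp
    unfold klF
    nlinarith [mul_le_mul_of_nonneg_left hlog ha]

lemma klF_eq_zero_iff {a c : ℝ} (ha : 0 ≤ a) (hc : 0 < c) :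
    klF a c = 0 ↔ a = c := by
  constructor
  · intro hz
    rcases eq_or_lt_of_le ha with h0 | hapos
    · exfalso
      rw [← h0] at hz
      rw [klF_zero_left] at hz
      exact hc.ne' hz
    · by_contra hne
      have hne' : c / a ≠ 1 := by
        intro h1
        rw [div_eq_one_iff_eq hapos.ne'] at h1
        exact hne h1.symm
      have hlog : Real.log (c / a) < c / a - 1 :=
        Real.log_lt_sub_one_of_pos (by positivity) hne'
      have hld : Real.log (a / c) = - Real.log (c / a) := by
        rw [← Real.log_inv]; congr 1; field_simp
      have hmul : a * Real.log (c/a) < a * (c/a - 1) :=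
        mul_lt_mul_of_pos_left hlog hapos
      have h2 : a * (c/a - 1) = c - a := by field_simp
      unfold klF at hz
      rw [hld] at hz
      nlinarith
  · rintro rfl; exact klF_self a

lemma klF_exp_shift {a r G : ℝ} (ha : 0 ≤ a) (h : a ≠ 0 → 0 < r) :
    klF a (r * Real.exp G) = klF a r - a * G + (r * Real.exp G - r) := by
  rcases eq_or_lt_of_le ha with h0 | hapos
  · simp [klF, ← h0]
  · have hr : 0 < r := h hapos.ne'
    have hre : (0:ℝ) < Real.exp G := Real.exp_pos _
    unfold klF
    have hd : a / (r * Real.exp G) = (a / r) * Real.exp (-G) := by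
      rw [Real.exp_neg]; field_simp
    rw [hd, Real.log_mul (by positivity) (by positivity), Real.log_exp]
    ring

lemma klF_mul_exp {r G : ℝ} (hr : 0 ≤ r) :
    klF (r * Real.exp G) r = (r * Real.exp G) * G - r * Real.exp G + r := by
  rcases eq_or_lt_of_le hr with h0 | hrpos
  · simp [klF, ← h0]
  · unfold klF
    have : r * Real.exp G / r = Real.exp G := by field_simp
    rw [this, Real.log_exp]

lemma walk_congr {y y' : ℕ → Bool} {x : ℕ} (h : ∀ i < x, y i = y' i) :
    walk y x = walk y' x :=
  Finset.sum_congr rfl fun i hi => by rw [h i (Finset.mem_range.mp hi)]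

lemma walk_succ (y : ℕ → Bool) (k : ℕ) : walk y (k+1) = walk y k + step (y k) :=
  Finset.sum_range_succ _ _

lemma walk_tri (n : ℕ) : ∀ z : ℕ,
    walk (fun i => decide (i < n)) z = if z ≤ n then (z:ℤ) else 2*n - z := by
  intro z
  induction z with
  | zero => simp [walk]
  | succ k ih =>
    rw [walk_succ, ih]
    rcases lt_or_ge k n with hk | hk
    · have h1 : k ≤ n := hk.le
      have h2 : k + 1 ≤ n := hk
      simp only [step, decide_eq_true_eq, hk, if_true, h1, h2]
      push_cast; ring
    · have h1 : ¬ (k + 1 ≤ n) := by omega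
      have h2 : ¬ (k < n) := by omega
      rcases eq_or_lt_of_le hk with he | hlt
      · have h3 : k ≤ n := le_of_eq he.symm
        simp only [step, decide_eq_true_eq, h2, if_false, h1, h3, if_true]
        subst he
        push_cast; ring
      · have h3 : ¬ (k ≤ n) := by omega
        simp only [step, decide_eq_true_eq, h2, if_false, h1, h3]
        push_cast; ring

lemma cardOf_pos {α : Type*} [Fintype α] {P : α → Prop} (h : ∃ a, P a) :
    0 < cardOf P := by
  classical
  unfold cardOf
  rw [Finset.card_pos]
  obtain ⟨a, ha⟩ := h
  exact ⟨a, Finset.mem_filter.mpr ⟨Finset.mem_univ _, ha⟩⟩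

lemma cardOf_le {α : Type*} [Fintype α] (P : α → Prop) :
    cardOf P ≤ Fintype.card α := by
  classical
  exact (Finset.card_filter_le _ _).trans (le_of_eq Finset.card_univ)

lemma Kret_nonneg (x : ℕ) : 0 ≤ Kret x := by
  unfold Kret; split
  · exact le_refl 0
  · positivity

lemma Kret_le_one (x : ℕ) : Kret x ≤ 1 := by
  unfold Kret; split
  · norm_num
  · have hcard : ((cardOf fun y : Fin x → Bool =>
        walk (ext y) x = 0 ∧ ∀ z, 0 < z → z < x → walk (ext y) z ≠ 0 : ℕ) : ℝ)
        ≤ (2:ℝ)^x := by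
      have := cardOf_le (fun y : Fin x → Bool =>
        walk (ext y) x = 0 ∧ ∀ z, 0 < z → z < x → walk (ext y) z ≠ 0)
      have hc : Fintype.card (Fin x → Bool) = 2^x := by
        simp [Fintype.card_fun]
      rw [hc] at this
      exact_mod_cast this
    have h1 : (1/2:ℝ)^x * ((cardOf fun y : Fin x → Bool =>
        walk (ext y) x = 0 ∧ ∀ z, 0 < z → z < x → walk (ext y) z ≠ 0 : ℕ) : ℝ)
        ≤ (1/2:ℝ)^x * (2:ℝ)^x := mul_le_mul_of_nonneg_left hcard (by positivity)
    have h2 : (1/2:ℝ)^x * (2:ℝ)^x = 1 := by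
      rw [← mul_pow]; norm_num
    linarith

lemma Kret_pos {n : ℕ} (hn : 1 ≤ n) : 0 < Kret (2*n) := by
  have h2n : 2*n ≠ 0 := by omega
  unfold Kret
  rw [if_neg h2n]
  apply mul_pos (by positivity)
  have h : 0 < cardOf fun y : Fin (2*n) → Bool =>
      walk (ext y) (2*n) = 0 ∧ ∀ z, 0 < z → z < 2*n → walk (ext y) z ≠ 0 := by
    apply cardOf_pos
    refine ⟨fun i => decide (i.1 < n), ?_, ?_⟩
    · have hc : walk (ext fun i : Fin (2*n) => decide (i.1 < n)) (2*n)
          = walk (fun i => decide (i < n)) (2*n) := by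
        apply walk_congr
        intro i hi
        simp [ext, hi]
      rw [hc, walk_tri]
      have h2 : ¬ (2*n ≤ n) := by omega
      rw [if_neg h2]
      push_cast; ring
    · intro z hz hz2
      have hc : walk (ext fun i : Fin (2*n) => decide (i.1 < n)) z
          = walk (fun i => decide (i < n)) z := by
        apply walk_congr
        intro i hi
        have hi2 : i < 2*n := by omega
        simp [ext, hi2]
      rw [hc, walk_tri]
      split
      · intro hcon
        have : z = 0 := by exact_mod_cast hcon
        omega
      · intro hcon
        have h4 : (2*(n:ℤ)) = (z:ℤ) := by linarith
        have : 2*n = z := by exact_mod_cast h4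
        omega
  exact_mod_cast h


def FRcard (x : ℕ) : ℕ :=
  cardOf fun y : Fin x → Bool =>
    walk (ext y) x = 0 ∧ ∀ z, 0 < z → z < x → walk (ext y) z ≠ 0

lemma Kret_eq {x : ℕ} (hx : x ≠ 0) : Kret x = (1/2:ℝ)^x * FRcard x := by
  unfold Kret FRcard
  rw [if_neg hx]

lemma cardOf_congr {α : Type*} [Fintype α] {P P' : α → Prop}
    (h : ∀ a, P a ↔ P' a) : cardOf P = cardOf P' := by
  classical
  unfold cardOf
  rw [Finset.filter_congr_decidable, Finset.filter_congr_decidable]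
  congr 1
  ext a
  simp [Finset.mem_filter, h a]

lemma cardOf_eq_nat_card {α : Type*} [Fintype α] (P : α → Prop) :
    cardOf P = Nat.card {a // P a} := by
  classical
  unfold cardOf
  rw [Nat.card_eq_fintype_card, Fintype.card_subtype, Finset.filter_congr_decidable]

lemma cardOf_restrict {M m : ℕ} (hm : m ≤ M) (Q : (Fin m → Bool) → Prop) :
    cardOf (fun y : Fin M → Bool => Q (fun i => y (Fin.castLE hm i)))
      = cardOf Q * 2^(M - m) := by
  classical
  obtain ⟨k, rfl⟩ : ∃ k, M = m + k := ⟨M - m, by omega⟩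
  have hk : m + k - m = k := by omega
  rw [hk]
  rw [cardOf_eq_nat_card, cardOf_eq_nat_card]
  have key : ∀ (z : Fin m → Bool) (w : Fin k → Bool),
      (fun i : Fin m => (fun jj : Fin (m+k) =>
        if h : jj.1 < m then z ⟨jj.1, h⟩ else w ⟨jj.1 - m, by omega⟩)
          (Fin.castLE hm i)) = z := by
    intro z w
    funext i
    have hi : (Fin.castLE hm i).1 < m := i.2
    simp only [hi, dif_pos]
    exact congrArg z (Fin.ext rfl)
  have e1 : {y : Fin (m+k) → Bool // Q (fun i => y (Fin.castLE hm i))}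
      ≃ {z : Fin m → Bool // Q z} × (Fin k → Bool) :=
    { toFun := fun y => (⟨fun i => y.1 (Fin.castLE hm i), y.2⟩,
        fun j => y.1 ⟨m + j.1, by omega⟩)
      invFun := fun q => ⟨fun jj =>
          if h : jj.1 < m then q.1.1 ⟨jj.1, h⟩ else q.2 ⟨jj.1 - m, by omega⟩,
        by rw [key]; exact q.1.2⟩
      left_inv := fun y => by
        apply Subtype.ext
        funext jj
        by_cases h : jj.1 < m
        · simp only [dif_pos h]
          exact congrArg y.1 (Fin.ext rfl)
        · simp only [dif_neg h]
          refine congrArg y.1 (Fin.ext ?_)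
          show m + (jj.1 - m) = jj.1
          omega
      right_inv := fun q => by
        refine Prod.ext ?_ ?_
        · apply Subtype.ext
          funext i
          have hi : (Fin.castLE hm i).1 < m := i.2
          simp only [dif_pos hi]
          exact congrArg q.1.1 (Fin.ext rfl)
        · funext j
          have hj : ¬ ((⟨m + j.1, by omega⟩ : Fin (m+k)).1 < m) := by
            simp only []
            omega
          simp only [dif_neg hj]
          refine congrArg q.2 (Fin.ext ?_)
          show m + j.1 - m = j.1
          omega }
  rw [Nat.card_congr e1, Nat.card_prod]
  congr 1
  rw [Nat.card_eq_fintype_card]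
  simp [Fintype.card_fun]

lemma ext_eq_of_lt {M : ℕ} (y : Fin M → Bool) {i : ℕ} (hi : i < M) :
    ext y i = y ⟨i, hi⟩ := by simp [ext, hi]

lemma FR_restrict {M m : ℕ} (hm : m ≤ M) (y : Fin M → Bool) :
    (walk (ext y) m = 0 ∧ ∀ z, 0 < z → z < m → walk (ext y) z ≠ 0) ↔
    (walk (ext (fun i : Fin m => y (Fin.castLE hm i))) m = 0 ∧
      ∀ z, 0 < z → z < m → walk (ext (fun i : Fin m => y (Fin.castLE hm i))) z ≠ 0) := by
  have hw : ∀ z ≤ m, walk (ext y) z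
      = walk (ext (fun i : Fin m => y (Fin.castLE hm i))) z := by
    intro z hz
    apply walk_congr
    intro i hi
    have him : i < m := lt_of_lt_of_le hi hz
    have hiM : i < M := lt_of_lt_of_le him hm
    rw [ext_eq_of_lt y hiM, ext_eq_of_lt _ him]
    congr 1
  constructor
  · rintro ⟨h1, h2⟩
    refine ⟨by rw [← hw m le_rfl]; exact h1, fun z hz1 hz2 => ?_⟩
    rw [← hw z hz2.le]
    exact h2 z hz1 hz2
  · rintro ⟨h1, h2⟩
    refine ⟨by rw [hw m le_rfl]; exact h1, fun z hz1 hz2 => ?_⟩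
    rw [hw z hz2.le]
    exact h2 z hz1 hz2

lemma FRcard_sum_le (N : ℕ) :
    ∑ n ∈ Finset.Icc 1 N, FRcard (2*n) * 2^(2*N - 2*n) ≤ 2^(2*N) := by
  classical
  set E : ℕ → Finset (Fin (2*N) → Bool) := fun n =>
    Finset.univ.filter (fun y => walk (ext y) (2*n) = 0 ∧
      ∀ z, 0 < z → z < 2*n → walk (ext y) z ≠ 0) with hE
  have hcard : ∀ n ∈ Finset.Icc 1 N, (E n).card = FRcard (2*n) * 2^(2*N - 2*n) := by
    intro n hn
    rw [Finset.mem_Icc] at hn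
    have hmn : 2*n ≤ 2*N := by omega
    have h1 : (E n).card = cardOf (fun y : Fin (2*N) → Bool =>
        walk (ext y) (2*n) = 0 ∧ ∀ z, 0 < z → z < 2*n → walk (ext y) z ≠ 0) := by
      rw [hE]
      unfold cardOf
      rw [Finset.filter_congr_decidable]
    rw [h1]
    rw [cardOf_congr (fun y => FR_restrict hmn y)]
    exact cardOf_restrict hmn (fun z : Fin (2*n) → Bool =>
      walk (ext z) (2*n) = 0 ∧ ∀ w, 0 < w → w < 2*n → walk (ext z) w ≠ 0)
  have hdisj : ∀ n ∈ Finset.Icc 1 N, ∀ n' ∈ Finset.Icc 1 N, n ≠ n' →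
      Disjoint (E n) (E n') := by
    intro n hn n' hn' hne
    rw [Finset.disjoint_left]
    intro y hy hy'
    rw [hE] at hy hy'
    simp only [Finset.mem_filter, Finset.mem_univ, true_and] at hy hy'
    rw [Finset.mem_Icc] at hn hn'
    rcases lt_or_gt_of_ne hne with hlt | hlt
    · exact hy'.2 (2*n) (by omega) (by omega) hy.1
    · exact hy.2 (2*n') (by omega) (by omega) hy'.1
  calc ∑ n ∈ Finset.Icc 1 N, FRcard (2*n) * 2^(2*N - 2*n)
      = ∑ n ∈ Finset.Icc 1 N, (E n).card := (Finset.sum_congr rfl hcard).symm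
    _ = ((Finset.Icc 1 N).biUnion E).card := (Finset.card_biUnion hdisj).symm
    _ ≤ Fintype.card (Fin (2*N) → Bool) := Finset.card_le_univ _
    _ = 2^(2*N) := by simp [Fintype.card_fun]

lemma Kret_partial_sum_le (N : ℕ) :
    ∑ n ∈ Finset.range N, Kret (2*n) ≤ 1 := by
  rcases Nat.eq_zero_or_pos N with rfl | hN
  · simp
  obtain ⟨N', rfl⟩ : ∃ N', N = N' + 1 := ⟨N - 1, by omega⟩
  have hsplit : ∑ n ∈ Finset.range (N'+1), Kret (2*n)
      = ∑ n ∈ Finset.Icc 1 N', Kret (2*n) := by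
    rw [Finset.range_eq_Ico, Finset.sum_eq_sum_Ico_succ_bot (by omega : 0 < N'+1),
      Finset.Ico_add_one_right_eq_Icc]
    simp [Kret]
  rw [hsplit]
  have hterm : ∀ n ∈ Finset.Icc 1 N', Kret (2*n)
      = (1/2:ℝ)^(2*N') * ((FRcard (2*n) * 2^(2*N' - 2*n) : ℕ) : ℝ) := by
    intro n hn
    rw [Finset.mem_Icc] at hn
    rw [Kret_eq (by omega)]
    push_cast
    have h2 : ((2:ℝ))^(2*N' - 2*n) = 2^(2*N') / 2^(2*n) := by
      rw [eq_div_iff (by positivity), ← pow_add]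
      congr 1
      omega
    rw [h2]
    have : (1/2:ℝ)^(2*n) = 1/2^(2*n) := by rw [div_pow, one_pow]
    have h3 : (1/2:ℝ)^(2*N') = 1/2^(2*N') := by rw [div_pow, one_pow]
    rw [this, h3]
    field_simp
  rw [Finset.sum_congr rfl hterm, ← Finset.mul_sum]
  have hle : ∑ n ∈ Finset.Icc 1 N', ((FRcard (2*n) * 2^(2*N' - 2*n) : ℕ) : ℝ)
      ≤ ((2:ℕ):ℝ)^(2*N') := by
    rw [← Nat.cast_sum]
    have := FRcard_sum_le N'
    exact_mod_cast this
  calc (1/2:ℝ)^(2*N') * ∑ n ∈ Finset.Icc 1 N', ((FRcard (2*n) * 2^(2*N' - 2*n) : ℕ) : ℝ)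
      ≤ (1/2:ℝ)^(2*N') * (2:ℝ)^(2*N') := by
        apply mul_le_mul_of_nonneg_left _ (by positivity)
        exact_mod_cast hle
    _ = 1 := by rw [← mul_pow]; norm_num

lemma summable_Kret2 : Summable (fun n : ℕ => Kret (2*n)) :=
  summable_of_sum_range_le (fun n => Kret_nonneg _) Kret_partial_sum_le


variable {T : ℕ} [NeZero T] {ω : ℕ → ℤ} {lam h b : ℝ}

lemma summable_pmat_term (α β : ZMod T) :
    Summable (fun n : ℕ => if (n : ZMod T) = β - α then Kret (2 * n) else 0) := by
  apply Summable.of_nonneg_of_le _ _ summable_Kret2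
  · intro n; split
    · exact Kret_nonneg _
    · exact le_refl 0
  · intro n; split
    · exact le_refl _
    · exact Kret_nonneg _

lemma pmat_nonneg (α β : ZMod T) : 0 ≤ pmat T α β := by
  apply tsum_nonneg
  intro n; split
  · exact Kret_nonneg _
  · exact le_refl 0

lemma pmat_pos (α β : ZMod T) : 0 < pmat T α β := by
  have hT : 0 < T := Nat.pos_of_ne_zero (NeZero.ne T)
  apply Summable.tsum_pos (summable_pmat_term α β) _ ((β - α).val + T)
  · have hc : (((β - α).val + T : ℕ) : ZMod T) = β - α := by
      push_cast [ZMod.natCast_self]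
      rw [ZMod.natCast_rightInverse (β - α)]
      ring
    rw [if_pos hc]
    exact Kret_pos (by omega)
  · intro n; split
    · exact Kret_nonneg _
    · exact le_refl 0

lemma sum_pmat_row (α : ZMod T) : ∑ β : ZMod T, pmat T α β = ∑' n : ℕ, Kret (2 * n) := by
  unfold pmat
  rw [← Summable.tsum_finsetSum (fun β _ => summable_pmat_term α β)]
  congr 1
  funext n
  have : ∀ β : ZMod T, ((n : ZMod T) = β - α) ↔ (β = α + n) := by
    intro β
    constructor
    · intro hh; rw [hh]; ring
    · intro hh; rw [hh]; ring
  calc ∑ β : ZMod T, (if (n : ZMod T) = β - α then Kret (2*n) else 0)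
      = ∑ β : ZMod T, (if β = α + n then Kret (2*n) else 0) :=
        Finset.sum_congr rfl (fun β _ => by rw [if_congr (this β) rfl rfl])
    _ = Kret (2*n) := by rw [Finset.sum_ite_eq' Finset.univ (α + (n:ZMod T)) (fun _ => Kret (2*n))]; simp

lemma Kcond_nonneg (α β : ZMod T) (x : ℕ) : 0 ≤ Kcond T α β x := by
  unfold Kcond; split
  · exact div_nonneg (Kret_nonneg _) (pmat_nonneg _ _)
  · exact le_refl 0

lemma Kcond_pos_of (α β : ZMod T) {x : ℕ} (h1 : x % 2 = 0)
    (h2 : ((x / 2 : ℕ) : ZMod T) = β - α) (h3 : x ≠ 0) : 0 < Kcond T α β x := by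
  unfold Kcond
  rw [if_pos ⟨h1, h2⟩]
  apply div_pos _ (pmat_pos α β)
  have hx : x = 2 * (x / 2) := by omega
  rw [hx]
  exact Kret_pos (by omega)

lemma of_Kcond_ne_zero {α β : ZMod T} {x : ℕ} (hne : Kcond T α β x ≠ 0) :
    x % 2 = 0 ∧ 2 ≤ x ∧ ((x / 2 : ℕ) : ZMod T) = β - α := by
  unfold Kcond at hne
  by_cases hc : x % 2 = 0 ∧ ((x / 2 : ℕ) : ZMod T) = β - α
  · rw [if_pos hc] at hne
    have hK : Kret x ≠ 0 := fun hz => hne (by rw [hz, zero_div])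
    have hx0 : x ≠ 0 := fun hz => hK (by rw [hz]; simp [Kret])
    exact ⟨hc.1, by omega, hc.2⟩
  · rw [if_neg hc] at hne
    exact absurd rfl hne

lemma Kcond_le (α β : ZMod T) (x : ℕ) : Kcond T α β x ≤ 1 / pmat T α β := by
  unfold Kcond; split
  · have hp := pmat_pos (T := T) α β
    gcongr
    exact Kret_le_one x
  · have hp := pmat_pos (T := T) α β
    positivity

lemma summable_Kcond_geom (α β : ZMod T) {r : ℝ} (hr0 : 0 ≤ r) (hr1 : r < 1) :
    Summable (fun x : ℕ => Kcond T α β x * r ^ x) := by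
  apply Summable.of_nonneg_of_le
    (fun x => mul_nonneg (Kcond_nonneg α β x) (by positivity))
    (fun x => ?_) (((summable_geometric_of_lt_one hr0 hr1)).mul_left (1 / pmat T α β))
  exact mul_le_mul_of_nonneg_right (Kcond_le α β x) (by positivity)

lemma summable_Kcond_x_geom (α β : ZMod T) {r : ℝ} (hr0 : 0 ≤ r) (hr1 : r < 1) :
    Summable (fun x : ℕ => (x : ℝ) * (Kcond T α β x * r ^ x)) := by
  have hs : Summable (fun x : ℕ => (x:ℝ) ^ 1 * r ^ x) :=
    summable_pow_mul_geometric_of_norm_lt_one 1 (by rwa [Real.norm_eq_abs, abs_of_nonneg hr0])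
  apply Summable.of_nonneg_of_le
    (fun x => mul_nonneg (Nat.cast_nonneg x)
      (mul_nonneg (Kcond_nonneg α β x) (by positivity)))
    (fun x => ?_) (hs.mul_left (1 / pmat T α β))
  have := mul_le_mul_of_nonneg_right (Kcond_le α β x) (pow_nonneg hr0 x)
  calc (x:ℝ) * (Kcond T α β x * r ^ x) ≤ (x:ℝ) * (1 / pmat T α β * r ^ x) := by
        apply mul_le_mul_of_nonneg_left this (Nat.cast_nonneg x)
    _ = 1 / pmat T α β * ((x:ℝ)^1 * r ^ x) := by ring

lemma sum_Kcond (α β : ZMod T) : ∑' x : ℕ, Kcond T α β x = 1 := by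
  have hinj : Function.Injective (fun n : ℕ => 2 * n) :=
    mul_right_injective₀ (by norm_num : (2:ℕ) ≠ 0)
  have hsupp : Function.support (fun x => Kcond T α β x) ⊆ Set.range (fun n : ℕ => 2 * n) := by
    intro x hx
    obtain ⟨h1, _, _⟩ := of_Kcond_ne_zero hx
    refine ⟨x / 2, ?_⟩
    show 2 * (x / 2) = x
    omega
  rw [← Function.Injective.tsum_eq hinj hsupp]
  have hval : ∀ n : ℕ, Kcond T α β (2 * n)
      = (if (n : ZMod T) = β - α then Kret (2*n) else 0) / pmat T α β := by
    intro n
    unfold Kcond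
    have h1 : (2*n) % 2 = 0 := by omega
    have h2 : (2*n) / 2 = n := by omega
    rw [h2]
    by_cases hc : ((n:ℕ) : ZMod T) = β - α
    · rw [if_pos ⟨h1, hc⟩, if_pos hc]
    · rw [if_neg (fun hand => hc hand.2), if_neg hc, zero_div]
  calc ∑' n : ℕ, Kcond T α β (2*n)
      = ∑' n : ℕ, (if (n : ZMod T) = β - α then Kret (2*n) else 0) / pmat T α β := by
        congr 1; funext n; exact hval n
    _ = (∑' n : ℕ, if (n : ZMod T) = β - α then Kret (2*n) else 0) / pmat T α β :=
        tsum_div_const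
    _ = 1 := by rw [div_eq_one_iff_eq (pmat_pos α β).ne']; rfl

def CPhi (T : ℕ) [NeZero T] (ω : ℕ → ℤ) (lam : ℝ) : ℝ :=
  Finset.univ.sup' Finset.univ_nonempty (fun q : ZMod T × ZMod T =>
    Real.log ((1 + Real.exp (2 * lam * |((xiM T ω q.1 q.2 : ℤ) : ℝ)|)) / 2))

lemma PhiM_lb (α β : ZMod T) (x : ℕ) : -Real.log 2 ≤ PhiM T ω lam h α β x := by
  unfold PhiM
  have he : 0 < Real.exp (-2 * (lam * ((xiM T ω α β : ℤ):ℝ) + lam * h * x)) := Real.exp_pos _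
  have h1 : (1/2 : ℝ) ≤ (1 + Real.exp (-2 * (lam * ((xiM T ω α β : ℤ):ℝ) + lam * h * x))) / 2 := by
    linarith
  have h2 : Real.log (1/2) ≤ _ := Real.log_le_log (by norm_num) h1
  calc -Real.log 2 = Real.log (1/2) := by rw [one_div, Real.log_inv]
    _ ≤ _ := h2

lemma PhiM_le_CPhi (hlam : 0 ≤ lam) (hh : 0 ≤ h) (α β : ZMod T) (x : ℕ) :
    PhiM T ω lam h α β x ≤ CPhi T ω lam := by
  set ξ : ℝ := ((xiM T ω α β : ℤ) : ℝ) with hxi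
  have harg : -2 * (lam * ξ + lam * h * x) ≤ 2 * lam * |ξ| := by
    have habs : -ξ ≤ |ξ| := neg_le_abs ξ
    have h1 : lam * (-ξ) ≤ lam * |ξ| := mul_le_mul_of_nonneg_left habs hlam
    have h2 : 0 ≤ lam * h * x := by positivity
    nlinarith
  have hle : PhiM T ω lam h α β x
      ≤ Real.log ((1 + Real.exp (2 * lam * |ξ|)) / 2) := by
    unfold PhiM
    apply Real.log_le_log (by positivity)
    have := Real.exp_le_exp.mpr harg
    linarith
  refine hle.trans ?_
  exact Finset.le_sup' (f := fun q : ZMod T × ZMod T =>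
    Real.log ((1 + Real.exp (2 * lam * |((xiM T ω q.1 q.2 : ℤ) : ℝ)|)) / 2))
    (Finset.mem_univ (α, β))

lemma abs_PhiM_le (hlam : 0 ≤ lam) (hh : 0 ≤ h) (α β : ZMod T) (x : ℕ) :
    |PhiM T ω lam h α β x| ≤ max (CPhi T ω lam) (Real.log 2) := by
  rw [abs_le]
  constructor
  · have := PhiM_lb (ω := ω) (lam := lam) (h := h) α β x
    have h2 : Real.log 2 ≤ max (CPhi T ω lam) (Real.log 2) := le_max_right _ _
    linarith
  · exact (PhiM_le_CPhi hlam hh α β x).trans (le_max_left _ _)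

lemma natCast_val_add_T (γ : ZMod T) : ((γ.val + T : ℕ) : ZMod T) = γ := by
  push_cast [ZMod.natCast_self]
  rw [ZMod.natCast_rightInverse γ]
  ring

lemma exp_PhiM_sub_le (hlam : 0 ≤ lam) (hh : 0 ≤ h) (α β : ZMod T) (x : ℕ) :
    Real.exp (PhiM T ω lam h α β x - b * x)
      = Real.exp (PhiM T ω lam h α β x) * (Real.exp (-b)) ^ x := by
  have harg : PhiM T ω lam h α β x - b * x = PhiM T ω lam h α β x + (x:ℕ) * (-b) := by
    push_cast; ring
  rw [harg, Real.exp_add, Real.exp_nat_mul]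

lemma summable_Amat_term (hb : 0 < b) (hlam : 0 ≤ lam) (hh : 0 ≤ h) (α β : ZMod T) :
    Summable (fun x : ℕ => Kcond T α β x * Real.exp (PhiM T ω lam h α β x - b * x)) := by
  have hr0 : (0:ℝ) ≤ Real.exp (-b) := (Real.exp_pos _).le
  have hr1 : Real.exp (-b) < 1 := Real.exp_lt_one_iff.mpr (by linarith)
  apply Summable.of_nonneg_of_le
    (fun x => mul_nonneg (Kcond_nonneg α β x) (Real.exp_pos _).le)
    (fun x => ?_)
    ((summable_Kcond_geom α β hr0 hr1).mul_left (Real.exp (CPhi T ω lam)))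
  rw [exp_PhiM_sub_le hlam hh]
  have h1 : Real.exp (PhiM T ω lam h α β x) ≤ Real.exp (CPhi T ω lam) :=
    Real.exp_le_exp.mpr (PhiM_le_CPhi hlam hh α β x)
  calc Kcond T α β x * (Real.exp (PhiM T ω lam h α β x) * Real.exp (-b) ^ x)
      ≤ Kcond T α β x * (Real.exp (CPhi T ω lam) * Real.exp (-b) ^ x) := by
        apply mul_le_mul_of_nonneg_left _ (Kcond_nonneg α β x)
        apply mul_le_mul_of_nonneg_right h1 (by positivity)
    _ = Real.exp (CPhi T ω lam) * (Kcond T α β x * Real.exp (-b) ^ x) := by ring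

lemma summable_x_Amat_term (hb : 0 < b) (hlam : 0 ≤ lam) (hh : 0 ≤ h) (α β : ZMod T) :
    Summable (fun x : ℕ => (x:ℝ) * (Kcond T α β x * Real.exp (PhiM T ω lam h α β x - b * x))) := by
  have hr0 : (0:ℝ) ≤ Real.exp (-b) := (Real.exp_pos _).le
  have hr1 : Real.exp (-b) < 1 := Real.exp_lt_one_iff.mpr (by linarith)
  apply Summable.of_nonneg_of_le
    (fun x => mul_nonneg (Nat.cast_nonneg x)
      (mul_nonneg (Kcond_nonneg α β x) (Real.exp_pos _).le))
    (fun x => ?_)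
    ((summable_Kcond_x_geom α β hr0 hr1).mul_left (Real.exp (CPhi T ω lam)))
  rw [exp_PhiM_sub_le hlam hh]
  have h1 : Real.exp (PhiM T ω lam h α β x) ≤ Real.exp (CPhi T ω lam) :=
    Real.exp_le_exp.mpr (PhiM_le_CPhi hlam hh α β x)
  calc (x:ℝ) * (Kcond T α β x * (Real.exp (PhiM T ω lam h α β x) * Real.exp (-b) ^ x))
      ≤ (x:ℝ) * (Kcond T α β x * (Real.exp (CPhi T ω lam) * Real.exp (-b) ^ x)) := by
        apply mul_le_mul_of_nonneg_left _ (Nat.cast_nonneg x)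
        apply mul_le_mul_of_nonneg_left _ (Kcond_nonneg α β x)
        apply mul_le_mul_of_nonneg_right h1 (by positivity)
    _ = Real.exp (CPhi T ω lam) * ((x:ℝ) * (Kcond T α β x * Real.exp (-b) ^ x)) := by ring

lemma Amat_pos (hb : 0 < b) (hlam : 0 ≤ lam) (hh : 0 ≤ h) (α β : ZMod T) :
    0 < Amat T ω b lam h α β := by
  unfold Amat
  apply mul_pos (pmat_pos α β)
  have hT : 0 < T := Nat.pos_of_ne_zero (NeZero.ne T)
  apply Summable.tsum_pos (summable_Amat_term hb hlam hh α β)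
    (fun x => mul_nonneg (Kcond_nonneg α β x) (Real.exp_pos _).le)
    (2 * ((β - α).val + T))
  apply mul_pos _ (Real.exp_pos _)
  apply Kcond_pos_of α β (by omega) _ (by omega)
  have hdiv : 2 * ((β - α).val + T) / 2 = (β - α).val + T := by omega
  rw [hdiv]
  exact natCast_val_add_T (β - α)

lemma Amat_nonneg (α β : ZMod T) : 0 ≤ Amat T ω b lam h α β := by
  unfold Amat
  apply mul_nonneg (pmat_nonneg α β)
  exact tsum_nonneg (fun x => mul_nonneg (Kcond_nonneg α β x) (Real.exp_pos _).le)

lemma stationary_unique {S : Type*} [Fintype S] [Nonempty S] (P : S → S → ℝ)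
    (hP : ∀ i j, 0 < P i j) (a c : S → ℝ) (ha0 : ∀ i, 0 ≤ a i) (hc0 : ∀ i, 0 < c i)
    (ha1 : ∑ i, a i = 1) (hc1 : ∑ i, c i = 1)
    (hsa : ∀ j, ∑ i, a i * P i j = a j) (hsc : ∀ j, ∑ i, c i * P i j = c j) :
    a = c := by
  obtain ⟨i0, _, hmin⟩ := Finset.exists_min_image Finset.univ (fun i => a i / c i)
    Finset.univ_nonempty
  set t := a i0 / c i0 with ht
  have hkey : ∀ i, t * c i ≤ a i := by
    intro i
    have h1 : t ≤ a i / c i := hmin i (Finset.mem_univ i)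
    rwa [le_div_iff₀ (hc0 i)] at h1
  have hzero : ∑ i, (a i - t * c i) * P i i0 = 0 := by
    have e1 : ∑ i, (a i - t * c i) * P i i0
        = ∑ i, a i * P i i0 - t * ∑ i, c i * P i i0 := by
      rw [Finset.mul_sum, ← Finset.sum_sub_distrib]
      congr 1; funext i; ring
    rw [e1, hsa, hsc, ht, div_mul_cancel₀ _ (hc0 i0).ne', sub_self]
  have hall : ∀ i, a i = t * c i := by
    have := (Finset.sum_eq_zero_iff_of_nonneg
      (fun i _ => mul_nonneg (by linarith [hkey i]) (hP i i0).le)).mp hzero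
    intro i
    have h2 := this i (Finset.mem_univ i)
    rcases mul_eq_zero.mp h2 with h3 | h3
    · linarith
    · exact absurd h3 (hP i i0).ne'
  have hsum : ∑ i, a i = t * ∑ i, c i := by
    rw [Finset.mul_sum]
    exact Finset.sum_congr rfl (fun i _ => hall i)
  rw [ha1, hc1, mul_one] at hsum
  have ht1 : t = 1 := hsum.symm
  funext i
  rw [hall i, ht1, one_mul]

lemma summable_Kcond (α β : ZMod T) : Summable (Kcond T α β) := by
  have hinj : Function.Injective (fun n : ℕ => 2 * n) :=
    mul_right_injective₀ (by norm_num : (2:ℕ) ≠ 0)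
  have hsupp : Function.support (Kcond T α β) ⊆ Set.range (fun n : ℕ => 2 * n) := by
    intro x hx
    obtain ⟨h1, _, _⟩ := of_Kcond_ne_zero hx
    refine ⟨x / 2, ?_⟩
    show 2 * (x / 2) = x
    omega
  have hz : ∀ x ∉ Set.range (fun n : ℕ => 2 * n), Kcond T α β x = 0 := by
    intro x hx
    by_contra hne
    exact hx (hsupp hne)
  rw [← hinj.summable_iff hz]
  have hval : ∀ n : ℕ, (Kcond T α β ∘ (fun n : ℕ => 2 * n)) n
      = (if ((n : ℕ) : ZMod T) = β - α then Kret (2*n) else 0) / pmat T α β := by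
    intro n
    show Kcond T α β (2*n) = _
    unfold Kcond
    have h1 : (2*n) % 2 = 0 := by omega
    have h2 : (2*n) / 2 = n := by omega
    rw [h2]
    by_cases hc : ((n:ℕ) : ZMod T) = β - α
    · rw [if_pos ⟨h1, hc⟩, if_pos hc]
    · rw [if_neg (fun hand => hc hand.2), if_neg hc, zero_div]
  rw [show (Kcond T α β ∘ fun n : ℕ => 2 * n)
      = fun n : ℕ => (if ((n : ℕ) : ZMod T) = β - α then Kret (2*n) else 0) / pmat T α β
    from funext hval]
  exact (summable_pmat_term α β).div_const _

lemma summable_bounded_mul {ι : Type*} {τ : ι → ℝ} (hτ0 : ∀ p, 0 ≤ τ p)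
    (hτ : Summable τ) (f : ι → ℝ) (C : ℝ) (hf : ∀ p, |f p| ≤ C) :
    Summable (fun p => f p * τ p) := by
  apply Summable.of_abs
  apply Summable.of_nonneg_of_le (fun p => abs_nonneg _) _ (hτ.mul_left C)
  intro p
  rw [abs_mul, abs_of_nonneg (hτ0 p)]
  exact mul_le_mul_of_nonneg_right (hf p) (hτ0 p)

lemma marg1_nonneg {τ : Sp T → ℝ} (hτ0 : ∀ p, 0 ≤ τ p) (α : ZMod T) :
    0 ≤ marg1 τ α := tsum_nonneg (fun q => hτ0 _)

lemma marg1_eq_tsum_fiber (τ : Sp T → ℝ) (α : ZMod T) :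
    marg1 τ α = ∑' q : ZMod T × ℕ, τ (α, q) := rfl

lemma le_marg1 {τ : Sp T → ℝ} (hτ0 : ∀ p, 0 ≤ τ p) (hτ : Summable τ)
    (p : Sp T) : τ p ≤ marg1 τ p.1 := by
  have hfib : Summable (fun q : ZMod T × ℕ => τ (p.1, q)) := hτ.prod_factor p.1
  have := Summable.le_tsum hfib p.2 (fun q _ => hτ0 _)
  exact this

lemma tsum_mul_marg1 {τ : Sp T → ℝ} (hτ0 : ∀ p, 0 ≤ τ p) (hτ : Summable τ)
    (f : ZMod T → ℝ) :
    ∑' p : Sp T, f p.1 * τ p = ∑ α : ZMod T, f α * marg1 τ α := by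
  obtain ⟨C, hC⟩ : ∃ C, ∀ α, |f α| ≤ C :=
    ⟨Finset.univ.sup' Finset.univ_nonempty (fun α => |f α|),
     fun α => Finset.le_sup' (f := fun α => |f α|) (Finset.mem_univ α)⟩
  have hs : Summable (fun p : Sp T => f p.1 * τ p) :=
    summable_bounded_mul hτ0 hτ _ C (fun p => hC p.1)
  rw [Summable.tsum_prod' hs (fun α => (hτ.prod_factor α).mul_left (f α))]
  rw [tsum_fintype]
  congr 1
  funext α
  show ∑' q : ZMod T × ℕ, f α * τ (α, q) = f α * marg1 τ α
  rw [tsum_mul_left]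
  rfl

def swapE (T : ℕ) : Sp T ≃ Sp T :=
  { toFun := fun p => (p.2.1, p.1, p.2.2)
    invFun := fun p => (p.2.1, p.1, p.2.2)
    left_inv := fun p => rfl
    right_inv := fun p => rfl }

lemma marg1_swap (τ : Sp T → ℝ) (β : ZMod T) :
    marg1 (fun p => τ (swapE T p)) β = marg2 τ β := rfl

lemma tsum_mul_marg2 {τ : Sp T → ℝ} (hτ0 : ∀ p, 0 ≤ τ p) (hτ : Summable τ)
    (f : ZMod T → ℝ) :
    ∑' p : Sp T, f p.2.1 * τ p = ∑ β : ZMod T, f β * marg2 τ β := by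
  have hτ' : Summable (fun p => τ (swapE T p)) := (swapE T).summable_iff.mpr hτ
  have h0' : ∀ p, 0 ≤ τ (swapE T p) := fun p => hτ0 _
  have e : ∑' (c : Sp T), f c.1 * τ (swapE T c) = ∑' p : Sp T, f p.2.1 * τ p :=
    Equiv.tsum_eq (swapE T) (fun p => f p.2.1 * τ p)
  calc ∑' p : Sp T, f p.2.1 * τ p
      = ∑' c : Sp T, f c.1 * τ (swapE T c) := e.symm
    _ = ∑ β : ZMod T, f β * marg1 (fun p => τ (swapE T p)) β := tsum_mul_marg1 h0' hτ' f
    _ = ∑ β : ZMod T, f β * marg2 τ β := rfl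

lemma sum_marg1 {τ : Sp T → ℝ} (hτ0 : ∀ p, 0 ≤ τ p) (hτ : Summable τ) :
    ∑ α : ZMod T, marg1 τ α = ∑' p : Sp T, τ p := by
  have := tsum_mul_marg1 hτ0 hτ (fun _ => 1)
  simpa using this.symm

-- reference measure lemmas
lemma summable_ref (w : ZMod T → ℝ) (hw : ∀ α, 0 ≤ w α) :
    Summable (fun p : Sp T => w p.1 * pmat T p.1 p.2.1 * Kcond T p.1 p.2.1 p.2.2) := by
  have h0 : 0 ≤ fun p : Sp T => w p.1 * pmat T p.1 p.2.1 * Kcond T p.1 p.2.1 p.2.2 :=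
    fun p => mul_nonneg (mul_nonneg (hw _) (pmat_nonneg _ _)) (Kcond_nonneg _ _ _)
  refine (summable_prod_of_nonneg h0).mpr ⟨fun α => ?_, ?_⟩
  · have h0' : 0 ≤ fun q : ZMod T × ℕ => w α * pmat T α q.1 * Kcond T α q.1 q.2 :=
      fun q => mul_nonneg (mul_nonneg (hw _) (pmat_nonneg _ _)) (Kcond_nonneg _ _ _)
    refine (summable_prod_of_nonneg h0').mpr ⟨fun β => ?_, ?_⟩
    · exact (summable_Kcond α β).mul_left (w α * pmat T α β)
    · exact Summable.of_finite
  · exact Summable.of_finite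

lemma tsum_ref (w : ZMod T → ℝ) (hw : ∀ α, 0 ≤ w α) :
    ∑' p : Sp T, w p.1 * pmat T p.1 p.2.1 * Kcond T p.1 p.2.1 p.2.2
      = (∑ α : ZMod T, w α) * ∑' n : ℕ, Kret (2 * n) := by
  have hs := summable_ref w hw
  rw [Summable.tsum_prod' hs (fun α => hs.prod_factor α)]
  rw [tsum_fintype, Finset.sum_mul]
  congr 1
  funext α
  have hfib : Summable (fun q : ZMod T × ℕ =>
      w α * pmat T α q.1 * Kcond T α q.1 q.2) := hs.prod_factor α
  rw [Summable.tsum_prod' hfib (fun β => hfib.prod_factor β)]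
  rw [tsum_fintype]
  have : ∀ β : ZMod T, ∑' x : ℕ, w α * pmat T α β * Kcond T α β x
      = w α * pmat T α β := by
    intro β
    rw [tsum_mul_left, sum_Kcond, mul_one]
  rw [Finset.sum_congr rfl (fun β _ => this β)]
  rw [← Finset.mul_sum, sum_pmat_row]

section Nu
variable (hb : 0 < b) (hlam : 0 ≤ lam) (hh : 0 ≤ h)
variable {π v : ZMod T → ℝ}
include hb hlam hh

lemma Zeig_pos (hv : ∀ i, 0 < v i)
    (heig : ∀ i, ∑' j : ZMod T, Amat T ω b lam h i j * v j = Zeig T ω b lam h * v i) :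
    0 < Zeig T ω b lam h := by
  have i : ZMod T := 0
  have hpos : 0 < ∑' j : ZMod T, Amat T ω b lam h i j * v j := by
    rw [tsum_fintype]
    apply Finset.sum_pos (fun j _ => mul_pos (Amat_pos hb hlam hh i j) (hv j))
      Finset.univ_nonempty
  rw [heig i] at hpos
  by_contra hZ
  push_neg at hZ
  exact absurd hpos (not_lt.mpr (mul_nonpos_of_nonpos_of_nonneg hZ (hv i).le))

omit hb hlam hh in
lemma muB_nonneg (hπ0 : ∀ i, 0 ≤ π i) (hv : ∀ i, 0 < v i)
    (hZ : 0 < Zeig T ω b lam h) (p : Sp T) : 0 ≤ muB T ω b lam h π v p := by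
  unfold muB
  have h1 := hπ0 p.1
  have h2 := pmat_nonneg (T := T) p.1 p.2.1
  have h3 := Kcond_nonneg (T := T) p.1 p.2.1 p.2.2
  have h4 := (Real.exp_pos (PhiM T ω lam h p.1 p.2.1 p.2.2 - b * p.2.2)).le
  have h5 := (hv p.2.1).le
  have h6 := mul_pos hZ (hv p.1)
  positivity

omit hb hlam hh in
lemma muB_factor (p : Sp T) :
    muB T ω b lam h π v p
      = (π p.1 * v p.2.1 / (Zeig T ω b lam h * v p.1) * pmat T p.1 p.2.1) *
        (Kcond T p.1 p.2.1 p.2.2 * Real.exp (PhiM T ω lam h p.1 p.2.1 p.2.2 - b * p.2.2)) := by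
  unfold muB
  ring

lemma summable_muB_fiber2 (α β : ZMod T) :
    Summable (fun x : ℕ => muB T ω b lam h π v (α, β, x)) := by
  apply ((summable_Amat_term hb hlam hh α β).mul_left
    (π α * v β / (Zeig T ω b lam h * v α) * pmat T α β)).congr
  intro x
  exact (muB_factor (α, β, x)).symm

omit hb hlam hh in
lemma tsum_muB_fiber2 (α β : ZMod T) :
    ∑' x : ℕ, muB T ω b lam h π v (α, β, x)
      = π α * (Amat T ω b lam h α β * v β / (Zeig T ω b lam h * v α)) := by
  calc ∑' x : ℕ, muB T ω b lam h π v (α, β, x)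
      = ∑' x : ℕ, (π α * v β / (Zeig T ω b lam h * v α) * pmat T α β) *
          (Kcond T α β x * Real.exp (PhiM T ω lam h α β x - b * x)) := by
        congr 1
        funext x
        exact muB_factor (α, β, x)
    _ = (π α * v β / (Zeig T ω b lam h * v α) * pmat T α β) *
          ∑' x : ℕ, Kcond T α β x * Real.exp (PhiM T ω lam h α β x - b * x) :=
        tsum_mul_left
    _ = π α * (Amat T ω b lam h α β * v β / (Zeig T ω b lam h * v α)) := by
        unfold Amat
        ring

lemma summable_muB_fiber1 (hπ0 : ∀ i, 0 ≤ π i) (hv : ∀ i, 0 < v i)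
    (hZ : 0 < Zeig T ω b lam h) (α : ZMod T) :
    Summable (fun q : ZMod T × ℕ => muB T ω b lam h π v (α, q)) := by
  have h0' : 0 ≤ fun q : ZMod T × ℕ => muB T ω b lam h π v (α, q) :=
    fun q => muB_nonneg hπ0 hv hZ _
  refine (summable_prod_of_nonneg h0').mpr ⟨fun β => ?_, ?_⟩
  · exact summable_muB_fiber2 hb hlam hh α β
  · exact Summable.of_finite

lemma summable_muB (hπ0 : ∀ i, 0 ≤ π i) (hv : ∀ i, 0 < v i)
    (hZ : 0 < Zeig T ω b lam h) :
    Summable (muB T ω b lam h π v) := by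
  have h0 : 0 ≤ muB T ω b lam h π v := fun p => muB_nonneg hπ0 hv hZ p
  refine (summable_prod_of_nonneg h0).mpr ⟨fun α => ?_, ?_⟩
  · exact summable_muB_fiber1 hb hlam hh hπ0 hv hZ α
  · exact Summable.of_finite

lemma marg1_muB (hπ0 : ∀ i, 0 ≤ π i) (hv : ∀ i, 0 < v i)
    (heig : ∀ i, ∑' j : ZMod T, Amat T ω b lam h i j * v j = Zeig T ω b lam h * v i) :
    marg1 (muB T ω b lam h π v) = π := by
  have hZ : 0 < Zeig T ω b lam h := Zeig_pos hb hlam hh hv heig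
  funext α
  show ∑' q : ZMod T × ℕ, muB T ω b lam h π v (α, q.1, q.2) = π α
  have hfib := summable_muB_fiber1 hb hlam hh hπ0 hv hZ α
  rw [show (fun q : ZMod T × ℕ => muB T ω b lam h π v (α, q.1, q.2))
      = fun q : ZMod T × ℕ => muB T ω b lam h π v (α, q) from rfl]
  rw [Summable.tsum_prod' hfib (fun β => summable_muB_fiber2 hb hlam hh α β)]
  rw [tsum_fintype]
  rw [Finset.sum_congr rfl (fun β _ => tsum_muB_fiber2 (α := α) (β := β))]
  rw [← Finset.mul_sum]
  have hsum : ∑ β : ZMod T, Amat T ω b lam h α β * v β / (Zeig T ω b lam h * v α)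
      = (∑ β : ZMod T, Amat T ω b lam h α β * v β) / (Zeig T ω b lam h * v α) := by
    rw [Finset.sum_div]
  rw [hsum, ← tsum_fintype (L := SummationFilter.unconditional _), heig α, div_self (mul_pos hZ (hv α)).ne', mul_one]

lemma marg2_muB (hπ0 : ∀ i, 0 ≤ π i) (hv : ∀ i, 0 < v i)
    (heig : ∀ i, ∑' j : ZMod T, Amat T ω b lam h i j * v j = Zeig T ω b lam h * v i)
    (hstat : ∀ j, (∑' i : ZMod T, π i *
      (Amat T ω b lam h i j * v j / (Zeig T ω b lam h * v i))) = π j) :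
    marg2 (muB T ω b lam h π v) = π := by
  have hZ : 0 < Zeig T ω b lam h := Zeig_pos hb hlam hh hv heig
  funext β
  show ∑' q : ZMod T × ℕ, muB T ω b lam h π v (q.1, β, q.2) = π β
  have h0 : 0 ≤ fun q : ZMod T × ℕ => muB T ω b lam h π v (q.1, β, q.2) :=
    fun q => muB_nonneg hπ0 hv hZ _
  have hfib : ∀ α : ZMod T, Summable (fun x : ℕ => muB T ω b lam h π v (α, β, x)) :=
    fun α => summable_muB_fiber2 hb hlam hh α β
  have hsum : Summable (fun q : ZMod T × ℕ => muB T ω b lam h π v (q.1, β, q.2)) :=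
    (summable_prod_of_nonneg h0).mpr ⟨fun α => hfib α, Summable.of_finite⟩
  rw [Summable.tsum_prod' hsum (fun α => hfib α)]
  rw [tsum_fintype]
  rw [Finset.sum_congr rfl (fun α _ => tsum_muB_fiber2 (α := α) (β := β))]
  rw [← tsum_fintype (L := SummationFilter.unconditional _)]
  exact hstat β

lemma tsum_muB (hπ0 : ∀ i, 0 ≤ π i) (hv : ∀ i, 0 < v i)
    (heig : ∀ i, ∑' j : ZMod T, Amat T ω b lam h i j * v j = Zeig T ω b lam h * v i)
    (hπ1 : (∑' i : ZMod T, π i) = 1) :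
    ∑' p : Sp T, muB T ω b lam h π v p = 1 := by
  have hZ : 0 < Zeig T ω b lam h := Zeig_pos hb hlam hh hv heig
  rw [← sum_marg1 (fun p => muB_nonneg hπ0 hv hZ p) (summable_muB hb hlam hh hπ0 hv hZ)]
  rw [marg1_muB hb hlam hh hπ0 hv heig, ← tsum_fintype (L := SummationFilter.unconditional _)]
  exact hπ1

omit hb hlam hh in
lemma muB_Kcond_ne_zero {p : Sp T} (hp : muB T ω b lam h π v p ≠ 0) :
    Kcond T p.1 p.2.1 p.2.2 ≠ 0 := by
  intro hK
  apply hp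
  unfold muB
  rw [hK]
  ring

omit hb hlam hh in
lemma muB_pos_of_Kcond (hπpos : ∀ i, 0 < π i) (hv : ∀ i, 0 < v i)
    (hZ : 0 < Zeig T ω b lam h) {p : Sp T} (hK : Kcond T p.1 p.2.1 p.2.2 ≠ 0) :
    0 < muB T ω b lam h π v p := by
  unfold muB
  have hKpos : 0 < Kcond T p.1 p.2.1 p.2.2 := (Kcond_nonneg _ _ _).lt_of_ne' hK
  have h1 := hπpos p.1
  have h2 := pmat_pos (T := T) p.1 p.2.1
  have h4 := Real.exp_pos (PhiM T ω lam h p.1 p.2.1 p.2.2 - b * p.2.2)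
  have h5 := hv p.2.1
  have h6 := mul_pos hZ (hv p.1)
  positivity

lemma pi_pos (hv : ∀ i, 0 < v i)
    (heig : ∀ i, ∑' j : ZMod T, Amat T ω b lam h i j * v j = Zeig T ω b lam h * v i)
    (hπ0 : ∀ i, 0 ≤ π i) (hπ1 : (∑' i : ZMod T, π i) = 1)
    (hstat : ∀ j, (∑' i : ZMod T, π i *
      (Amat T ω b lam h i j * v j / (Zeig T ω b lam h * v i))) = π j) :
    ∀ j, 0 < π j := by
  have hZ : 0 < Zeig T ω b lam h := Zeig_pos hb hlam hh hv heig
  have hsum1 : ∑ i : ZMod T, π i = 1 := by rw [← tsum_fintype (L := SummationFilter.unconditional _)]; exact hπ1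
  have hex : ∃ i0, 0 < π i0 := by
    by_contra hcon
    push_neg at hcon
    have : ∀ i : ZMod T, π i = 0 := fun i => le_antisymm (hcon i) (hπ0 i)
    rw [Finset.sum_congr rfl (fun i _ => this i)] at hsum1
    simp at hsum1
  obtain ⟨i0, hi0⟩ := hex
  intro j
  have hstatj : ∑ i : ZMod T, π i *
      (Amat T ω b lam h i j * v j / (Zeig T ω b lam h * v i)) = π j := by
    rw [← tsum_fintype (L := SummationFilter.unconditional _)]; exact hstat j
  rw [← hstatj]
  have hterm : 0 < π i0 * (Amat T ω b lam h i0 j * v j / (Zeig T ω b lam h * v i0)) :=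
    mul_pos hi0 (div_pos (mul_pos (Amat_pos hb hlam hh i0 j) (hv j))
      (mul_pos hZ (hv i0)))
  apply lt_of_lt_of_le hterm
  apply Finset.single_le_sum (f := fun i => π i *
    (Amat T ω b lam h i j * v j / (Zeig T ω b lam h * v i)))
    (fun i _ => mul_nonneg (hπ0 i) (div_nonneg
      (mul_nonneg (Amat_nonneg i j) (hv j).le) (mul_pos hZ (hv i)).le))
    (Finset.mem_univ i0)

lemma summable_x_muB (hπ0 : ∀ i, 0 ≤ π i) (hv : ∀ i, 0 < v i)
    (hZ : 0 < Zeig T ω b lam h) :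
    Summable (fun p : Sp T => (p.2.2 : ℝ) * muB T ω b lam h π v p) := by
  have h0 : 0 ≤ fun p : Sp T => (p.2.2 : ℝ) * muB T ω b lam h π v p :=
    fun p => mul_nonneg (Nat.cast_nonneg _) (muB_nonneg hπ0 hv hZ p)
  refine (summable_prod_of_nonneg h0).mpr ⟨fun α => ?_, ?_⟩
  · have h0' : 0 ≤ fun q : ZMod T × ℕ => (q.2 : ℝ) * muB T ω b lam h π v (α, q) :=
      fun q => mul_nonneg (Nat.cast_nonneg _) (muB_nonneg hπ0 hv hZ _)
    refine (summable_prod_of_nonneg h0').mpr ⟨fun β => ?_, ?_⟩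
    · apply ((summable_x_Amat_term hb hlam hh α β).mul_left
        (π α * v β / (Zeig T ω b lam h * v α) * pmat T α β)).congr
      intro x
      rw [muB_factor (α, β, x)]
      ring
    · exact Summable.of_finite
  · exact Summable.of_finite

lemma two_le_mean_muB (hπ0 : ∀ i, 0 ≤ π i) (hv : ∀ i, 0 < v i)
    (heig : ∀ i, ∑' j : ZMod T, Amat T ω b lam h i j * v j = Zeig T ω b lam h * v i)
    (hπ1 : (∑' i : ZMod T, π i) = 1) :
    2 ≤ ∑' p : Sp T, (p.2.2 : ℝ) * muB T ω b lam h π v p := by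
  have hZ : 0 < Zeig T ω b lam h := Zeig_pos hb hlam hh hv heig
  have hle : ∀ p : Sp T, 2 * muB T ω b lam h π v p ≤ (p.2.2:ℝ) * muB T ω b lam h π v p := by
    intro p
    rcases eq_or_ne (muB T ω b lam h π v p) 0 with hz | hz
    · rw [hz]; simp
    · obtain ⟨_, h2, _⟩ := of_Kcond_ne_zero (muB_Kcond_ne_zero hz)
      apply mul_le_mul_of_nonneg_right _ (muB_nonneg hπ0 hv hZ p)
      exact_mod_cast h2
  have h1 := Summable.tsum_le_tsum hle ((summable_muB hb hlam hh hπ0 hv hZ).mul_left 2)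
    (summable_x_muB hb hlam hh hπ0 hv hZ)
  rw [tsum_mul_left, tsum_muB hb hlam hh hπ0 hv heig hπ1, mul_one] at h1
  exact h1

end Nu

def Gfun (T : ℕ) (ω : ℕ → ℤ) (lam h b : ℝ) (v : ZMod T → ℝ) (p : Sp T) : ℝ :=
  PhiM T ω lam h p.1 p.2.1 p.2.2 - b * p.2.2 + Real.log (v p.2.1)
    - Real.log (Zeig T ω b lam h * v p.1)

def refM (T : ℕ) (w : ZMod T → ℝ) (p : Sp T) : ℝ :=
  w p.1 * pmat T p.1 p.2.1 * Kcond T p.1 p.2.1 p.2.2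

section GG
variable {π v : ZMod T → ℝ}

lemma refM_nonneg {w : ZMod T → ℝ} (hw : ∀ α, 0 ≤ w α) (p : Sp T) :
    0 ≤ refM T w p :=
  mul_nonneg (mul_nonneg (hw _) (pmat_nonneg _ _)) (Kcond_nonneg _ _ _)

lemma rho_eq_ref_exp (hv : ∀ i, 0 < v i) (hZ : 0 < Zeig T ω b lam h)
    (hπpos : ∀ i, 0 < π i) (w : ZMod T → ℝ) (p : Sp T) :
    w p.1 / π p.1 * muB T ω b lam h π v p
      = refM T w p * Real.exp (Gfun T ω lam h b v p) := by
  have hπne := (hπpos p.1).ne'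
  have hZv : 0 < Zeig T ω b lam h * v p.1 := mul_pos hZ (hv p.1)
  have hG : Gfun T ω lam h b v p
      = (PhiM T ω lam h p.1 p.2.1 p.2.2 - b * p.2.2)
        + (Real.log (v p.2.1) - Real.log (Zeig T ω b lam h * v p.1)) := by
    unfold Gfun; ring
  have h2 : Real.exp (Real.log (v p.2.1) - Real.log (Zeig T ω b lam h * v p.1))
      = v p.2.1 / (Zeig T ω b lam h * v p.1) := by
    rw [Real.exp_sub, Real.exp_log (hv p.2.1), Real.exp_log hZv]
  rw [hG, Real.exp_add, h2]
  unfold muB refM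
  field_simp

lemma muB_eq_ref_exp (hv : ∀ i, 0 < v i) (hZ : 0 < Zeig T ω b lam h)
    (hπpos : ∀ i, 0 < π i) (p : Sp T) :
    muB T ω b lam h π v p = refM T π p * Real.exp (Gfun T ω lam h b v p) := by
  have := rho_eq_ref_exp (ω := ω) (lam := lam) (h := h) (b := b) hv hZ hπpos π p
  rwa [div_self (hπpos p.1).ne', one_mul] at this

lemma abs_Gfun_le (hlam : 0 ≤ lam) (hh : 0 ≤ h) (hb : 0 < b) (p : Sp T) :
    |Gfun T ω lam h b v p|
      ≤ (max (CPhi T ω lam) (Real.log 2)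
          + Finset.univ.sup' Finset.univ_nonempty
            (fun q : ZMod T × ZMod T =>
              |Real.log (v q.2) - Real.log (Zeig T ω b lam h * v q.1)|))
        + b * p.2.2 := by
  have h1 : |PhiM T ω lam h p.1 p.2.1 p.2.2| ≤ max (CPhi T ω lam) (Real.log 2) :=
    abs_PhiM_le hlam hh _ _ _
  have h2 : |Real.log (v p.2.1) - Real.log (Zeig T ω b lam h * v p.1)|
      ≤ Finset.univ.sup' Finset.univ_nonempty
          (fun q : ZMod T × ZMod T =>
            |Real.log (v q.2) - Real.log (Zeig T ω b lam h * v q.1)|) :=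
    Finset.le_sup' (f := fun q : ZMod T × ZMod T =>
      |Real.log (v q.2) - Real.log (Zeig T ω b lam h * v q.1)|)
      (Finset.mem_univ (p.1, p.2.1))
  have hbx : (0:ℝ) ≤ b * p.2.2 := by positivity
  have hG : Gfun T ω lam h b v p
      = PhiM T ω lam h p.1 p.2.1 p.2.2 + (-(b * p.2.2))
        + (Real.log (v p.2.1) - Real.log (Zeig T ω b lam h * v p.1)) := by
    unfold Gfun; ring
  rw [hG]
  calc |PhiM T ω lam h p.1 p.2.1 p.2.2 + (-(b * p.2.2))
        + (Real.log (v p.2.1) - Real.log (Zeig T ω b lam h * v p.1))|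
      ≤ |PhiM T ω lam h p.1 p.2.1 p.2.2 + (-(b * p.2.2))|
        + |Real.log (v p.2.1) - Real.log (Zeig T ω b lam h * v p.1)| := abs_add_le _ _
    _ ≤ |PhiM T ω lam h p.1 p.2.1 p.2.2| + |(-(b * p.2.2))|
        + |Real.log (v p.2.1) - Real.log (Zeig T ω b lam h * v p.1)| := by
        have := abs_add_le (PhiM T ω lam h p.1 p.2.1 p.2.2) (-(b * p.2.2))
        linarith
    _ ≤ _ := by
        rw [abs_neg, abs_of_nonneg hbx]
        linarith

lemma summable_mul_G (hlam : 0 ≤ lam) (hh : 0 ≤ h) (hb : 0 < b)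
    {τ : Sp T → ℝ} (hτ0 : ∀ p, 0 ≤ τ p) (hτS : Summable τ)
    (hxτ : Summable (fun p : Sp T => (p.2.2:ℝ) * τ p)) :
    Summable (fun p => τ p * Gfun T ω lam h b v p) := by
  set C := max (CPhi T ω lam) (Real.log 2)
      + Finset.univ.sup' Finset.univ_nonempty
        (fun q : ZMod T × ZMod T =>
          |Real.log (v q.2) - Real.log (Zeig T ω b lam h * v q.1)|) with hC
  apply Summable.of_abs
  apply Summable.of_nonneg_of_le (fun p => abs_nonneg _) _
    ((hτS.mul_left C).add (hxτ.mul_left b))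
  intro p
  rw [abs_mul, abs_of_nonneg (hτ0 p)]
  have h1 := abs_Gfun_le (ω := ω) (v := v) hlam hh hb p
  calc τ p * |Gfun T ω lam h b v p| ≤ τ p * (C + b * p.2.2) :=
        mul_le_mul_of_nonneg_left (h1.trans_eq (by rw [hC])) (hτ0 p)
    _ = C * τ p + b * ((p.2.2:ℝ) * τ p) := by ring

lemma tsum_mul_G (hlam : 0 ≤ lam) (hh : 0 ≤ h) (hb : 0 < b)
    (hv : ∀ i, 0 < v i) (hZ : 0 < Zeig T ω b lam h)
    {τ : Sp T → ℝ} (hτ0 : ∀ p, 0 ≤ τ p) (hτS : Summable τ)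
    (hxτ : Summable (fun p : Sp T => (p.2.2:ℝ) * τ p))
    (hmarg : ∀ γ, marg1 τ γ = marg2 τ γ) (htot : ∑' p : Sp T, τ p = 1) :
    ∑' p : Sp T, τ p * Gfun T ω lam h b v p
      = (∑' p : Sp T, PhiM T ω lam h p.1 p.2.1 p.2.2 * τ p)
        - b * (∑' p : Sp T, (p.2.2:ℝ) * τ p) - Real.log (Zeig T ω b lam h) := by
  have hΦτ : Summable (fun p : Sp T => PhiM T ω lam h p.1 p.2.1 p.2.2 * τ p) :=
    summable_bounded_mul hτ0 hτS _ (max (CPhi T ω lam) (Real.log 2))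
      (fun p => abs_PhiM_le hlam hh _ _ _)
  obtain ⟨Cw, hCw⟩ : ∃ Cw, ∀ α : ZMod T, |Real.log (v α)| ≤ Cw :=
    ⟨Finset.univ.sup' Finset.univ_nonempty (fun α => |Real.log (v α)|),
     fun α => Finset.le_sup' (f := fun α => |Real.log (v α)|) (Finset.mem_univ α)⟩
  obtain ⟨Cz, hCz⟩ : ∃ Cz, ∀ α : ZMod T, |Real.log (Zeig T ω b lam h * v α)| ≤ Cz :=
    ⟨Finset.univ.sup' Finset.univ_nonempty
        (fun α => |Real.log (Zeig T ω b lam h * v α)|),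
     fun α => Finset.le_sup' (f := fun α => |Real.log (Zeig T ω b lam h * v α)|)
       (Finset.mem_univ α)⟩
  have hlogβ : Summable (fun p : Sp T => Real.log (v p.2.1) * τ p) :=
    summable_bounded_mul hτ0 hτS _ Cw (fun p => hCw p.2.1)
  have hlogα : Summable (fun p : Sp T => Real.log (Zeig T ω b lam h * v p.1) * τ p) :=
    summable_bounded_mul hτ0 hτS _ Cz (fun p => hCz p.1)
  have hpt : (fun p : Sp T => τ p * Gfun T ω lam h b v p)
      = fun p : Sp T => (PhiM T ω lam h p.1 p.2.1 p.2.2 * τ p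
          + Real.log (v p.2.1) * τ p)
        - (b * ((p.2.2:ℝ) * τ p) + Real.log (Zeig T ω b lam h * v p.1) * τ p) := by
    funext p
    unfold Gfun
    ring
  rw [hpt, Summable.tsum_sub (hΦτ.add hlogβ) ((hxτ.mul_left b).add hlogα),
    Summable.tsum_add hΦτ hlogβ, Summable.tsum_add (hxτ.mul_left b) hlogα, tsum_mul_left]
  have e1 : ∑' p : Sp T, Real.log (v p.2.1) * τ p
      = ∑ β : ZMod T, Real.log (v β) * marg1 τ β := by
    rw [tsum_mul_marg2 hτ0 hτS (fun β => Real.log (v β))]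
    exact Finset.sum_congr rfl (fun β _ => by rw [hmarg β])
  have e2 : ∑' p : Sp T, Real.log (Zeig T ω b lam h * v p.1) * τ p
      = Real.log (Zeig T ω b lam h) + ∑ α : ZMod T, Real.log (v α) * marg1 τ α := by
    rw [tsum_mul_marg1 hτ0 hτS (fun α => Real.log (Zeig T ω b lam h * v α))]
    have : ∀ α : ZMod T, Real.log (Zeig T ω b lam h * v α) * marg1 τ α
        = Real.log (Zeig T ω b lam h) * marg1 τ α + Real.log (v α) * marg1 τ α := by
      intro α
      rw [Real.log_mul hZ.ne' (hv α).ne']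
      ring
    rw [Finset.sum_congr rfl (fun α _ => this α), Finset.sum_add_distrib,
      ← Finset.mul_sum, sum_marg1 hτ0 hτS, htot, mul_one]
  rw [e1, e2]
  ring

end GG

lemma ennreal_tsum_ofReal_eq {ι : Type*} {f : ι → ℝ} (h0 : ∀ i, 0 ≤ f i)
    (hs : Summable f) :
    ∑' i, ENNReal.ofReal (f i) = ENNReal.ofReal (∑' i, f i) :=
  (ENNReal.ofReal_tsum_of_nonneg h0 hs).symm

lemma ennreal_tsum_ofReal_top {ι : Type*} {f : ι → ℝ} (h0 : ∀ i, 0 ≤ f i)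
    (hns : ¬ Summable f) :
    ∑' i, ENNReal.ofReal (f i) = ⊤ := by
  by_contra hne
  apply hns
  exact (ENNReal.summable_toReal hne).congr
    (fun i => ENNReal.toReal_ofReal (h0 i))

end Aux

theorem main_lemma {T : ℕ} [NeZero T] (ω : ℕ → ℤ) (lam h : ℝ) (hlam : 0 ≤ lam)
    (hh : 0 ≤ h) (b : ℝ) (hb : 0 < b) (π v : ZMod T → ℝ)
    (hpf : IsPF T ω b lam h π v) (μ : Sp T → ℝ) (hμ : memP μ)
    (hmean : (∑' p : Sp T, (p.2.2 : ℝ) * μ p)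
      = ∑' p : Sp T, (p.2.2 : ℝ) * muB T ω b lam h π v p) :
    Qfun T ω lam h μ ≤ Qfun T ω lam h (muB T ω b lam h π v) ∧
      (Qfun T ω lam h μ = Qfun T ω lam h (muB T ω b lam h π v) ↔
        μ = muB T ω b lam h π v) := by
  obtain ⟨hv, heig, hπ0, hπ1, hstat⟩ := hpf
  obtain ⟨hμ0, hμ1, hμsupp, hμmarg⟩ := hμ
  have hZ : 0 < Zeig T ω b lam h := Zeig_pos hb hlam hh hv heig
  have hπpos : ∀ j, 0 < π j := pi_pos hb hlam hh hv heig hπ0 hπ1 hstat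
  have hμS : Summable μ := hμ1.summable
  have hμtot : ∑' p : Sp T, μ p = 1 := hμ1.tsum_eq
  have hν0 : ∀ p, 0 ≤ muB T ω b lam h π v p := muB_nonneg hπ0 hv hZ
  have hνS : Summable (muB T ω b lam h π v) := summable_muB hb hlam hh hπ0 hv hZ
  have hνtot : ∑' p : Sp T, muB T ω b lam h π v p = 1 :=
    tsum_muB hb hlam hh hπ0 hv heig hπ1
  have hm1ν : marg1 (muB T ω b lam h π v) = π := marg1_muB hb hlam hh hπ0 hv heig
  have hm2ν : marg2 (muB T ω b lam h π v) = π :=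
    marg2_muB hb hlam hh hπ0 hv heig hstat
  have hνxS : Summable (fun p : Sp T => (p.2.2:ℝ) * muB T ω b lam h π v p) :=
    summable_x_muB hb hlam hh hπ0 hv hZ
  have hmν2 : 2 ≤ ∑' p : Sp T, (p.2.2:ℝ) * muB T ω b lam h π v p :=
    two_le_mean_muB hb hlam hh hπ0 hv heig hπ1
  have hμxS : Summable (fun p : Sp T => (p.2.2:ℝ) * μ p) := by
    by_contra hns
    rw [tsum_eq_zero_of_not_summable hns] at hmean
    linarith
  have hΦb : ∀ p : Sp T,
      |PhiM T ω lam h p.1 p.2.1 p.2.2| ≤ max (CPhi T ω lam) (Real.log 2) :=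
    fun p => abs_PhiM_le hlam hh _ _ _
  have hΦμS : Summable (fun p : Sp T => PhiM T ω lam h p.1 p.2.1 p.2.2 * μ p) :=
    summable_bounded_mul hμ0 hμS _ _ hΦb
  have hΦνS : Summable
      (fun p : Sp T => PhiM T ω lam h p.1 p.2.1 p.2.2 * muB T ω b lam h π v p) :=
    summable_bounded_mul hν0 hνS _ _ hΦb
  -- support facts for μ
  have hμKcond : ∀ p : Sp T, μ p ≠ 0 → 0 < Kcond T p.1 p.2.1 p.2.2 := by
    intro p hp
    obtain ⟨he, h2, hc⟩ := hμsupp p hp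
    exact Kcond_pos_of _ _ he hc (by omega)
  have hμm1 : ∀ p : Sp T, μ p ≠ 0 → 0 < marg1 μ p.1 :=
    fun p hp => lt_of_lt_of_le ((hμ0 p).lt_of_ne' hp) (le_marg1 hμ0 hμS p)
  have href_pos : ∀ p : Sp T, μ p ≠ 0 → 0 < refM T (marg1 μ) p := by
    intro p hp
    have h1 := pmat_pos (T := T) p.1 p.2.1
    have h2 := hμKcond p hp
    have h3 := hμm1 p hp
    unfold refM
    positivity
  have hρ_pos : ∀ p : Sp T, μ p ≠ 0 →
      0 < marg1 μ p.1 / π p.1 * muB T ω b lam h π v p :=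
    fun p hp => mul_pos (div_pos (hμm1 p hp) (hπpos p.1))
      (muB_pos_of_Kcond hπpos hv hZ (hμKcond p hp).ne')
  -- ν-side I computation
  have hFν_pt : ∀ p : Sp T, klF (muB T ω b lam h π v p) (refM T π p)
      = muB T ω b lam h π v p * Gfun T ω lam h b v p
        - muB T ω b lam h π v p + refM T π p := by
    intro p
    rw [muB_eq_ref_exp hv hZ hπpos p]
    exact klF_mul_exp (refM_nonneg (fun α => (hπ0 α)) p)
  have hrefνS : Summable (refM T π) := summable_ref π (fun α => hπ0 α)
  have hνGS : Summable
      (fun p => muB T ω b lam h π v p * Gfun T ω lam h b v p) :=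
    summable_mul_G hlam hh hb hν0 hνS hνxS
  have hFνS : Summable
      (fun p : Sp T => klF (muB T ω b lam h π v p) (refM T π p)) := by
    apply Summable.congr ((hνGS.sub hνS).add hrefνS)
    intro p
    exact (hFν_pt p).symm
  have hFν0 : ∀ p : Sp T, 0 ≤ klF (muB T ω b lam h π v p) (refM T π p) := by
    intro p
    apply klF_nonneg (hν0 p) (refM_nonneg (fun α => hπ0 α) p)
    intro hne hr0
    apply hne
    rw [muB_eq_ref_exp hv hZ hπpos p, hr0, zero_mul]
  have hπsum : ∑ α : ZMod T, π α = 1 := by rw [← tsum_fintype (L := SummationFilter.unconditional _)]; exact hπ1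
  have hrefνtot : ∑' p : Sp T, refM T π p = ∑' n : ℕ, Kret (2 * n) := by
    rw [show (refM T π) = fun p : Sp T =>
        π p.1 * pmat T p.1 p.2.1 * Kcond T p.1 p.2.1 p.2.2 from rfl]
    rw [tsum_ref π (fun α => hπ0 α), hπsum, one_mul]
  have hνG_val : ∑' p : Sp T, muB T ω b lam h π v p * Gfun T ω lam h b v p
      = (∑' p : Sp T, PhiM T ω lam h p.1 p.2.1 p.2.2 * muB T ω b lam h π v p)
        - b * (∑' p : Sp T, (p.2.2:ℝ) * muB T ω b lam h π v p)
        - Real.log (Zeig T ω b lam h) :=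
    tsum_mul_G hlam hh hb hv hZ hν0 hνS hνxS
      (fun γ => by rw [hm1ν, hm2ν]) hνtot
  have hSν_val : ∑' p : Sp T, klF (muB T ω b lam h π v p) (refM T π p)
      = (∑' p : Sp T, PhiM T ω lam h p.1 p.2.1 p.2.2 * muB T ω b lam h π v p)
        - b * (∑' p : Sp T, (p.2.2:ℝ) * muB T ω b lam h π v p)
        - Real.log (Zeig T ω b lam h) - 1 + ∑' n : ℕ, Kret (2 * n) := by
    calc ∑' p : Sp T, klF (muB T ω b lam h π v p) (refM T π p)
        = ∑' p : Sp T, (muB T ω b lam h π v p * Gfun T ω lam h b v p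
            - muB T ω b lam h π v p + refM T π p) := by
          congr 1
          funext p
          exact hFν_pt p
      _ = (∑' p : Sp T, (muB T ω b lam h π v p * Gfun T ω lam h b v p
            - muB T ω b lam h π v p)) + ∑' p : Sp T, refM T π p :=
          Summable.tsum_add (hνGS.sub hνS) hrefνS
      _ = _ := by
          rw [Summable.tsum_sub hνGS hνS, hνtot, hrefνtot, hνG_val]
  have hSν_0 : 0 ≤ ∑' p : Sp T, klF (muB T ω b lam h π v p) (refM T π p) :=
    tsum_nonneg hFν0
  have hIν : Ifun T (muB T ω b lam h π v)
      = ENNReal.ofReal (∑' p : Sp T, klF (muB T ω b lam h π v p) (refM T π p)) := by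
    unfold Ifun
    rw [hm1ν]
    exact ennreal_tsum_ofReal_eq hFν0 hFνS
  have hQν : Qfun T ω lam h (muB T ω b lam h π v)
      = ((b * (∑' p : Sp T, (p.2.2:ℝ) * muB T ω b lam h π v p)
          + Real.log (Zeig T ω b lam h) + 1 - ∑' n : ℕ, Kret (2 * n) : ℝ) : EReal) := by
    unfold Qfun
    rw [hIν, EReal.coe_ennreal_ofReal, sup_of_le_left hSν_0, ← EReal.coe_sub]
    rw [EReal.coe_eq_coe_iff]
    rw [hSν_val]
    ring
  have hF10 : ∀ p : Sp T, 0 ≤ klF (μ p) (refM T (marg1 μ) p) := by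
    intro p
    apply klF_nonneg (hμ0 p) (refM_nonneg (marg1_nonneg hμ0) p)
    intro hne
    exact (href_pos p hne).ne'
  by_cases hsum : Summable (fun p : Sp T => klF (μ p) (refM T (marg1 μ) p))
  case neg =>
    have hIμ : Ifun T μ = ⊤ := by
      unfold Ifun
      exact ennreal_tsum_ofReal_top hF10 hsum
    have hQμ : Qfun T ω lam h μ = ⊥ := by
      unfold Qfun
      rw [hIμ]
      rw [show ((⊤ : ℝ≥0∞) : EReal) = (⊤ : EReal) from rfl]
      rw [sub_eq_add_neg, EReal.neg_top, EReal.add_bot]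
    refine ⟨?_, ?_, ?_⟩
    · rw [hQμ]
      exact bot_le
    · intro hcontra
      rw [hQμ, hQν] at hcontra
      exact absurd hcontra.symm (EReal.coe_ne_bot _)
    · intro hcontra
      exfalso
      apply hsum
      rw [hcontra, hm1ν]
      exact hFνS
  case pos =>
    have hIμ : Ifun T μ
        = ENNReal.ofReal (∑' p : Sp T, klF (μ p) (refM T (marg1 μ) p)) := by
      unfold Ifun
      exact ennreal_tsum_ofReal_eq hF10 hsum
    have hS1_0 : 0 ≤ ∑' p : Sp T, klF (μ p) (refM T (marg1 μ) p) :=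
      tsum_nonneg hF10
    have hρ_eq : ∀ p : Sp T, marg1 μ p.1 / π p.1 * muB T ω b lam h π v p
        = refM T (marg1 μ) p * Real.exp (Gfun T ω lam h b v p) :=
      fun p => rho_eq_ref_exp hv hZ hπpos (marg1 μ) p
    have hF2_pt : ∀ p : Sp T,
        klF (μ p) (marg1 μ p.1 / π p.1 * muB T ω b lam h π v p)
          = klF (μ p) (refM T (marg1 μ) p) - μ p * Gfun T ω lam h b v p
            + (marg1 μ p.1 / π p.1 * muB T ω b lam h π v p - refM T (marg1 μ) p) := by
      intro p
      rw [hρ_eq p]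
      exact klF_exp_shift (hμ0 p) (fun hne => href_pos p hne)
    have hμGS : Summable (fun p => μ p * Gfun T ω lam h b v p) :=
      summable_mul_G hlam hh hb hμ0 hμS hμxS
    have hρS : Summable
        (fun p : Sp T => marg1 μ p.1 / π p.1 * muB T ω b lam h π v p) := by
      apply summable_bounded_mul hν0 hνS (fun p : Sp T => marg1 μ p.1 / π p.1)
        (Finset.univ.sup' Finset.univ_nonempty
          (fun α : ZMod T => |marg1 μ α / π α|))
      exact fun p => Finset.le_sup' (f := fun α : ZMod T => |marg1 μ α / π α|)
        (Finset.mem_univ p.1)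
    have hρ0 : ∀ p : Sp T, 0 ≤ marg1 μ p.1 / π p.1 * muB T ω b lam h π v p :=
      fun p => mul_nonneg (div_nonneg (marg1_nonneg hμ0 _) (hπpos _).le) (hν0 p)
    have hρtot : ∑' p : Sp T, marg1 μ p.1 / π p.1 * muB T ω b lam h π v p = 1 := by
      rw [tsum_mul_marg1 hν0 hνS (fun α => marg1 μ α / π α), hm1ν]
      have : ∀ α : ZMod T, marg1 μ α / π α * π α = marg1 μ α :=
        fun α => div_mul_cancel₀ _ (hπpos α).ne'
      rw [Finset.sum_congr rfl (fun α _ => this α), sum_marg1 hμ0 hμS, hμtot]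
    have hrefμS : Summable (refM T (marg1 μ)) :=
      summable_ref _ (marg1_nonneg hμ0)
    have hrefμtot : ∑' p : Sp T, refM T (marg1 μ) p = ∑' n : ℕ, Kret (2 * n) := by
      rw [show (refM T (marg1 μ)) = fun p : Sp T =>
          marg1 μ p.1 * pmat T p.1 p.2.1 * Kcond T p.1 p.2.1 p.2.2 from rfl]
      rw [tsum_ref _ (marg1_nonneg hμ0), sum_marg1 hμ0 hμS, hμtot, one_mul]
    have hμG_val : ∑' p : Sp T, μ p * Gfun T ω lam h b v p
        = (∑' p : Sp T, PhiM T ω lam h p.1 p.2.1 p.2.2 * μ p)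
          - b * (∑' p : Sp T, (p.2.2:ℝ) * muB T ω b lam h π v p)
          - Real.log (Zeig T ω b lam h) := by
      rw [tsum_mul_G hlam hh hb hv hZ hμ0 hμS hμxS hμmarg hμtot, hmean]
    have hF2S : Summable (fun p : Sp T =>
        klF (μ p) (marg1 μ p.1 / π p.1 * muB T ω b lam h π v p)) := by
      apply Summable.congr ((hsum.sub hμGS).add (hρS.sub hrefμS))
      intro p
      exact (hF2_pt p).symm
    have hF20 : ∀ p : Sp T,
        0 ≤ klF (μ p) (marg1 μ p.1 / π p.1 * muB T ω b lam h π v p) := by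
      intro p
      apply klF_nonneg (hμ0 p) (hρ0 p)
      intro hne
      exact (hρ_pos p hne).ne'
    have hS2_0 : 0 ≤ ∑' p : Sp T,
        klF (μ p) (marg1 μ p.1 / π p.1 * muB T ω b lam h π v p) :=
      tsum_nonneg hF20
    have hS2_val : ∑' p : Sp T,
        klF (μ p) (marg1 μ p.1 / π p.1 * muB T ω b lam h π v p)
          = (∑' p : Sp T, klF (μ p) (refM T (marg1 μ) p))
            - ((∑' p : Sp T, PhiM T ω lam h p.1 p.2.1 p.2.2 * μ p)
              - b * (∑' p : Sp T, (p.2.2:ℝ) * muB T ω b lam h π v p)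
              - Real.log (Zeig T ω b lam h))
            + (1 - ∑' n : ℕ, Kret (2 * n)) := by
      calc ∑' p : Sp T, klF (μ p) (marg1 μ p.1 / π p.1 * muB T ω b lam h π v p)
          = ∑' p : Sp T, (klF (μ p) (refM T (marg1 μ) p)
              - μ p * Gfun T ω lam h b v p
              + (marg1 μ p.1 / π p.1 * muB T ω b lam h π v p
                - refM T (marg1 μ) p)) := by
            congr 1
            funext p
            exact hF2_pt p
        _ = (∑' p : Sp T, (klF (μ p) (refM T (marg1 μ) p)
              - μ p * Gfun T ω lam h b v p))
            + ∑' p : Sp T, (marg1 μ p.1 / π p.1 * muB T ω b lam h π v p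
              - refM T (marg1 μ) p) :=
            Summable.tsum_add (hsum.sub hμGS) (hρS.sub hrefμS)
        _ = _ := by
            rw [Summable.tsum_sub hsum hμGS, Summable.tsum_sub hρS hrefμS, hρtot, hrefμtot, hμG_val]
    have hQμ : Qfun T ω lam h μ
        = (((∑' p : Sp T, PhiM T ω lam h p.1 p.2.1 p.2.2 * μ p)
            - ∑' p : Sp T, klF (μ p) (refM T (marg1 μ) p) : ℝ) : EReal) := by
      unfold Qfun
      rw [hIμ, EReal.coe_ennreal_ofReal, sup_of_le_left hS1_0, ← EReal.coe_sub]
    have key : (∑' p : Sp T, PhiM T ω lam h p.1 p.2.1 p.2.2 * μ p)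
          - (∑' p : Sp T, klF (μ p) (refM T (marg1 μ) p))
        = b * (∑' p : Sp T, (p.2.2:ℝ) * muB T ω b lam h π v p)
          + Real.log (Zeig T ω b lam h) + 1 - (∑' n : ℕ, Kret (2 * n))
          - ∑' p : Sp T, klF (μ p) (marg1 μ p.1 / π p.1 * muB T ω b lam h π v p) := by
      linarith [hS2_val]
    refine ⟨?_, ?_, ?_⟩
    · rw [hQμ, hQν, key]
      exact EReal.coe_le_coe_iff.mpr (by linarith)
    · intro heq
      rw [hQμ, hQν] at heq
      have hreal := EReal.coe_eq_coe_iff.mp heq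
      have hS2z : ∑' p : Sp T,
          klF (μ p) (marg1 μ p.1 / π p.1 * muB T ω b lam h π v p) = 0 := by
        rw [key] at hreal
        linarith
      have hterm : ∀ p : Sp T,
          klF (μ p) (marg1 μ p.1 / π p.1 * muB T ω b lam h π v p) = 0 := by
        intro p
        have hle := Summable.le_tsum hF2S p (fun q _ => hF20 q)
        rw [hS2z] at hle
        exact le_antisymm hle (hF20 p)
      have hμρ : ∀ p : Sp T, μ p = marg1 μ p.1 / π p.1 * muB T ω b lam h π v p := by
        intro p
        rcases eq_or_ne (μ p) 0 with hz | hz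
        · have h1 := hterm p
          rw [hz, klF_zero_left] at h1
          rw [hz, h1]
        · exact (klF_eq_zero_iff (hμ0 p) (hρ_pos p hz)).mp (hterm p)
      -- stationarity of marg1 μ
      have hm2 : ∀ j : ZMod T, marg2 μ j = ∑ i : ZMod T, marg1 μ i *
          (Amat T ω b lam h i j * v j / (Zeig T ω b lam h * v i)) := by
        intro j
        show ∑' q : ZMod T × ℕ, μ (q.1, j, q.2) = _
        have h0q : 0 ≤ fun q : ZMod T × ℕ =>
            marg1 μ q.1 / π q.1 * muB T ω b lam h π v (q.1, j, q.2) :=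
          fun q => mul_nonneg (div_nonneg (marg1_nonneg hμ0 _) (hπpos _).le) (hν0 _)
        have hfib : ∀ i : ZMod T, Summable (fun x : ℕ =>
            marg1 μ i / π i * muB T ω b lam h π v (i, j, x)) :=
          fun i => (summable_muB_fiber2 hb hlam hh i j).mul_left _
        have hsq : Summable (fun q : ZMod T × ℕ =>
            marg1 μ q.1 / π q.1 * muB T ω b lam h π v (q.1, j, q.2)) :=
          (summable_prod_of_nonneg h0q).mpr ⟨hfib, Summable.of_finite⟩
        calc ∑' q : ZMod T × ℕ, μ (q.1, j, q.2)
            = ∑' q : ZMod T × ℕ,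
                marg1 μ q.1 / π q.1 * muB T ω b lam h π v (q.1, j, q.2) := by
              congr 1
              funext q
              exact hμρ (q.1, j, q.2)
          _ = ∑ i : ZMod T, ∑' x : ℕ,
                marg1 μ i / π i * muB T ω b lam h π v (i, j, x) := by
              rw [Summable.tsum_prod' hsq hfib, tsum_fintype]
          _ = ∑ i : ZMod T, marg1 μ i *
                (Amat T ω b lam h i j * v j / (Zeig T ω b lam h * v i)) := by
              refine Finset.sum_congr rfl (fun i _ => ?_)
              rw [tsum_mul_left, tsum_muB_fiber2 (α := i) (β := j)]
              have hne := (hπpos i).ne'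
              have hZne := hZ.ne'
              have hvne := (hv i).ne'
              field_simp
          _ = _ := rfl
      have hμ1_stat : ∀ j : ZMod T, ∑ i : ZMod T, marg1 μ i *
          (Amat T ω b lam h i j * v j / (Zeig T ω b lam h * v i)) = marg1 μ j := by
        intro j
        rw [← hm2 j, ← hμmarg j]
      have hπ_stat : ∀ j : ZMod T, ∑ i : ZMod T, π i *
          (Amat T ω b lam h i j * v j / (Zeig T ω b lam h * v i)) = π j := by
        intro j
        rw [← tsum_fintype (L := SummationFilter.unconditional _)]
        exact hstat j
      have hm1_eq_π : marg1 μ = π := by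
        apply stationary_unique
          (fun i j => Amat T ω b lam h i j * v j / (Zeig T ω b lam h * v i))
          (fun i j => div_pos (mul_pos (Amat_pos hb hlam hh i j) (hv j))
            (mul_pos hZ (hv i)))
          (marg1 μ) π (marg1_nonneg hμ0) hπpos
          (by rw [sum_marg1 hμ0 hμS, hμtot]) hπsum hμ1_stat hπ_stat
      funext p
      rw [hμρ p, hm1_eq_π, div_self (hπpos p.1).ne', one_mul]
    · intro heq
      rw [heq]


/-- Lemma 2.2(ii): if `μ ∈ 𝒫` has the same mean excursion length as
`μ_b^{λ,h}`, then `Q(μ) ≤ Q(μ_b^{λ,h})`, with equality iff `μ = μ_b^{λ,h}`. -/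
theorem stmt9 (ω : ℕ → ℤ) (hω : memT ω) (lam h : ℝ) (hlam : 0 ≤ lam) (hh : 0 ≤ h)
    (b : ℝ) (hb : 0 < b) (π v : ZMod (Tper ω) → ℝ)
    (hpf : IsPF (Tper ω) ω b lam h π v)
    (μ : Sp (Tper ω) → ℝ) (hμ : memP μ)
    (hmean : (∑' p : Sp (Tper ω), (p.2.2 : ℝ) * μ p) =
      ∑' p : Sp (Tper ω), (p.2.2 : ℝ) * muB (Tper ω) ω b lam h π v p) :
    Qfun (Tper ω) ω lam h μ ≤ Qfun (Tper ω) ω lam h (muB (Tper ω) ω b lam h π v) ∧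
      (Qfun (Tper ω) ω lam h μ = Qfun (Tper ω) ω lam h (muB (Tper ω) ω b lam h π v) ↔
        μ = muB (Tper ω) ω b lam h π v) := by
  have hTpos : 0 < Tper ω := by
    obtain ⟨-, ⟨Tt, hTt⟩, -⟩ := hω
    have hmem : Tper ω ∈ {T | IsPeriod ω T} := Nat.sInf_mem ⟨Tt, hTt⟩
    exact hmem.1
  haveI : NeZero (Tper ω) := ⟨hTpos.ne'⟩
  exact main_lemma ω lam h hlam hh b hb π v hpf μ hμ hmean

end Copoly
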